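/- arXiv:2407.11411 — 4 statements merged into one kernel-verified Lean document; each statement's English description precedes it below -/
import Mathlib

section
/- Let r, s ≥ 3 be integers, let G ≤ Aut(Γ(r,s)) be transitive on the vertices of Γ(r,s), and let L be a normal subgroup of G of order 2. If the normal quotient Γ(r,s)_L is isomorphic to a cycle graph C_m for some m ≥ 3, then r = 4 or s = 4, and the non-identity element of L maps the vertex (0,0) to one of the vertices (2,0), (2,2), or (0,2). -/
open SimpleGraph

namespace OG4

variable {V : Type*} {W : Type*}

/-! ### Normal quotients, cycles, and basic pairs -/

/-- The setoid of orbits of a group `N` of permutations of `V`. -/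
def orbitSetoid (N : Subgroup (Equiv.Perm V)) : Setoid V := MulAction.orbitRel N V

/-- The (normal) quotient graph of a graph `Γ` with respect to a group `N` of permutations:
its vertices are the `N`-orbits, two distinct orbits being adjacent iff some vertex of one is
adjacent in `Γ` to some vertex of the other. -/
def quotientGraph (Γ : SimpleGraph V) (N : Subgroup (Equiv.Perm V)) :
    SimpleGraph (Quotient (orbitSetoid N)) :=
  SimpleGraph.fromRel fun a b =>
    ∃ x y : V, Quotient.mk (orbitSetoid N) x = a ∧ Quotient.mk (orbitSetoid N) y = b ∧ Γ.Adj x y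

/-- `N` is a normal subgroup of the subgroup `G` (of some ambient group). -/
def NormalIn {G : Type*} [Group G] (N H : Subgroup G) : Prop :=
  N ≤ H ∧ ∀ h ∈ H, ∀ n ∈ N, h * n * h⁻¹ ∈ N

/-- A graph is isomorphic to a cycle graph `C_m` for some `m ≥ 3`. -/
def IsoCycle (Δ : SimpleGraph W) : Prop :=
  ∃ m : ℕ, 3 ≤ m ∧ Nonempty (Δ ≃g SimpleGraph.cycleGraph m)

/-- Every normal quotient of `(Γ, G)` relative to a nontrivial normal subgroup is degenerate:
it has at most 2 vertices or is a cycle. -/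
def IsBasic (Γ : SimpleGraph V) (G : Subgroup (Equiv.Perm V)) : Prop :=
  ∀ N : Subgroup (Equiv.Perm V), NormalIn N G → N ≠ ⊥ →
    Nat.card (Quotient (orbitSetoid N)) ≤ 2 ∨ IsoCycle (quotientGraph Γ N)

/-- `(Γ, G)` is basic of cycle type. -/
def BasicOfCycleType (Γ : SimpleGraph V) (G : Subgroup (Equiv.Perm V)) : Prop :=
  IsBasic Γ G ∧
    ∃ N : Subgroup (Equiv.Perm V), NormalIn N G ∧ N ≠ ⊥ ∧ IsoCycle (quotientGraph Γ N)

/-- The kernel of the action of `G` on the set of `N`-orbits. -/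
def orbitKernel (G N : Subgroup (Equiv.Perm V)) : Subgroup (Equiv.Perm V) where
  carrier := {g | g ∈ G ∧ ∀ x : V,
    Quotient.mk (orbitSetoid N) (g x) = Quotient.mk (orbitSetoid N) x}
  one_mem' := ⟨G.one_mem, fun x => by simp⟩
  mul_mem' := by
    rintro a b ⟨haG, ha⟩ ⟨hbG, hb⟩
    refine ⟨G.mul_mem haG hbG, fun x => ?_⟩
    rw [Equiv.Perm.mul_apply, ha (b x), hb x]
  inv_mem' := by
    rintro a ⟨haG, ha⟩
    refine ⟨G.inv_mem haG, fun x => ?_⟩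
    have h := ha (a⁻¹ x)
    rw [show a (a⁻¹ x) = x by simp] at h
    exact h.symm

/-- `(Γ, G)` has a pair of independent cyclic normal quotients. -/
def HasIndepCyclicQuotients (Γ : SimpleGraph V) (G : Subgroup (Equiv.Perm V)) : Prop :=
  ∃ N M : Subgroup (Equiv.Perm V), NormalIn N G ∧ NormalIn M G ∧
    IsoCycle (quotientGraph Γ N) ∧ IsoCycle (quotientGraph Γ M) ∧
    ¬ IsoCycle (quotientGraph Γ (orbitKernel G N ⊓ orbitKernel G M))

/-- `(Γ, G)` is basic of independent-cycle type. -/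
def BasicOfIndependentCycleType (Γ : SimpleGraph V) (G : Subgroup (Equiv.Perm V)) : Prop :=
  IsBasic Γ G ∧ HasIndepCyclicQuotients Γ G

/-- Isomorphism of graph-group pairs: a graph isomorphism conjugating one group onto the other. -/
def PairIso (Γ : SimpleGraph V) (G : Subgroup (Equiv.Perm V))
    (Δ : SimpleGraph W) (H : Subgroup (Equiv.Perm W)) : Prop :=
  ∃ e : Γ ≃g Δ, ∀ h : Equiv.Perm W, h ∈ H ↔ ∃ g ∈ G, e.toEquiv.permCongr g = h

/-! ### Minimal normal subgroups -/

/-- `M` is a minimal normal subgroup of the ambient group. -/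
def IsMinimalNormal {G : Type*} [Group G] (M : Subgroup G) : Prop :=
  M.Normal ∧ M ≠ ⊥ ∧ ∀ N : Subgroup G, N.Normal → N ≤ M → N = ⊥ ∨ N = M

/-- `M` is a minimal normal subgroup of the subgroup `H`. -/
def IsMinimalNormalIn {G : Type*} [Group G] (M H : Subgroup G) : Prop :=
  NormalIn M H ∧ M ≠ ⊥ ∧ ∀ N : Subgroup G, NormalIn N H → N ≤ M → N = ⊥ ∨ N = M

/-! ### The graphs `Γ(r,s)` and their automorphisms -/

/-- In `Γ(r,s)`, the vertex `(i,j)` is joined to the four vertices `(i ± 1, j ± 1)`. -/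
def gammaRel (r s : ℕ) (x y : ZMod r × ZMod s) : Prop :=
  (y.1 = x.1 + 1 ∨ y.1 = x.1 - 1) ∧ (y.2 = x.2 + 1 ∨ y.2 = x.2 - 1)

/-- The graph `Γ(r,s)` on `ℤ_r × ℤ_s`. -/
def Gamma (r s : ℕ) : SimpleGraph (ZMod r × ZMod s) := SimpleGraph.fromRel (gammaRel r s)

/-- `μ : (i,j) ↦ (i+1, j)`. -/
def mu (r s : ℕ) : Equiv.Perm (ZMod r × ZMod s) :=
  (Equiv.addRight (1 : ZMod r)).prodCongr (Equiv.refl (ZMod s))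

/-- `ν : (i,j) ↦ (i, j+1)`. -/
def nu (r s : ℕ) : Equiv.Perm (ZMod r × ZMod s) :=
  (Equiv.refl (ZMod r)).prodCongr (Equiv.addRight (1 : ZMod s))

/-- `σ : (i,j) ↦ (-i, j)`. -/
def sigma (r s : ℕ) : Equiv.Perm (ZMod r × ZMod s) :=
  (Equiv.neg (ZMod r)).prodCongr (Equiv.refl (ZMod s))

/-- `τ : (i,j) ↦ (-i, -j)`. -/
def tau (r s : ℕ) : Equiv.Perm (ZMod r × ZMod s) :=
  (Equiv.neg (ZMod r)).prodCongr (Equiv.neg (ZMod s))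

/-- `σν : (i,j) ↦ (-i, j+1)`. -/
def sigmaNu (r s : ℕ) : Equiv.Perm (ZMod r × ZMod s) :=
  (Equiv.neg (ZMod r)).prodCongr (Equiv.addRight (1 : ZMod s))

/-- `μν : (i,j) ↦ (i+1, j+1)`. -/
def muNu (r s : ℕ) : Equiv.Perm (ZMod r × ZMod s) :=
  (Equiv.addRight (1 : ZMod r)).prodCongr (Equiv.addRight (1 : ZMod s))

/-- `σμν : (i,j) ↦ (-(i+1), j+1)`. -/
def sigmaMuNu (r s : ℕ) : Equiv.Perm (ZMod r × ZMod s) :=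
  ((Equiv.addRight (1 : ZMod r)).trans (Equiv.neg (ZMod r))).prodCongr
    (Equiv.addRight (1 : ZMod s))

/-- `μ² : (i,j) ↦ (i+2, j)`. -/
def muSq (r s : ℕ) : Equiv.Perm (ZMod r × ZMod s) :=
  (Equiv.addRight (2 : ZMod r)).prodCongr (Equiv.refl (ZMod s))

/-- `ν² : (i,j) ↦ (i, j+2)`. -/
def nuSq (r s : ℕ) : Equiv.Perm (ZMod r × ZMod s) :=
  (Equiv.refl (ZMod r)).prodCongr (Equiv.addRight (2 : ZMod s))

/-- `μ^k : (i,j) ↦ (i+k, j)`. -/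
def muPow (r s k : ℕ) : Equiv.Perm (ZMod r × ZMod s) :=
  (Equiv.addRight ((k : ZMod r))).prodCongr (Equiv.refl (ZMod s))

/-- `μ^k ν² : (i,j) ↦ (i+k, j+2)`. -/
def muPowNuSq (r s k : ℕ) : Equiv.Perm (ZMod r × ZMod s) :=
  (Equiv.addRight ((k : ZMod r))).prodCongr (Equiv.addRight (2 : ZMod s))

/-- `G(r,s) = ⟨μ, ν, σ⟩`. -/
def Ggroup (r s : ℕ) : Subgroup (Equiv.Perm (ZMod r × ZMod s)) :=
  Subgroup.closure {mu r s, nu r s, sigma r s}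

/-- `H(r,s) = ⟨μ, σν, τ⟩`. -/
def Hgroup (r s : ℕ) : Subgroup (Equiv.Perm (ZMod r × ZMod s)) :=
  Subgroup.closure {mu r s, sigmaNu r s, tau r s}

/-! ### The graphs `Γ⁺(r,s)` (for `r`, `s` even) -/

/-- `X⁺`: the set of `(i,j)` with `i` and `j` of the same parity. -/
def XPlus (r s : ℕ) : Set (ZMod r × ZMod s) := {x | x.1.val % 2 = x.2.val % 2}

/-- `Γ⁺(r,s)`, the subgraph of `Γ(r,s)` induced on `X⁺`. -/
def GammaPlus (r s : ℕ) : SimpleGraph (XPlus r s) :=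
  SimpleGraph.induce (XPlus r s) (Gamma r s)

section parity

lemma val_add_one_mod_two (r : ℕ) (hr : 2 ∣ r) (hr0 : r ≠ 0) (i : ZMod r) :
    (i + 1).val % 2 = (i.val + 1) % 2 := by
  haveI : NeZero r := ⟨hr0⟩
  haveI : Fact (1 < r) := ⟨by have := Nat.le_of_dvd (Nat.pos_of_ne_zero hr0) hr; omega⟩
  rw [ZMod.val_add, Nat.mod_mod_of_dvd _ hr, ZMod.val_one]

lemma val_add_two_mod_two (r : ℕ) (hr : 2 ∣ r) (hr0 : r ≠ 0) (i : ZMod r) :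
    (i + 2).val % 2 = i.val % 2 := by
  have h1 := val_add_one_mod_two r hr hr0 i
  have h2 := val_add_one_mod_two r hr hr0 (i + 1)
  rw [show i + 1 + 1 = i + 2 by ring] at h2
  omega

lemma val_neg_mod_two (r : ℕ) (hr : 2 ∣ r) (hr0 : r ≠ 0) (i : ZMod r) :
    (-i).val % 2 = i.val % 2 := by
  haveI : NeZero r := ⟨hr0⟩
  rcases eq_or_ne i 0 with h | h
  · simp [h]
  · have h1 : (-i).val = r - i.val := by rw [ZMod.neg_val]; simp [h]
    have h2 : i.val < r := ZMod.val_lt i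
    have h3 : i.val ≠ 0 := fun hh => h ((ZMod.val_eq_zero i).mp hh)
    obtain ⟨t, rfl⟩ := hr
    rw [h1]
    omega

end parity

section plusPerms

variable (r s : ℕ)

/-- The restriction of `μ²` to `X⁺`. -/
def muSqP (hr : 2 ∣ r) (hr0 : r ≠ 0) : Equiv.Perm (XPlus r s) :=
  (muSq r s).subtypePerm (by
    intro x
    have h := val_add_two_mod_two r hr hr0 x.1
    simp only [XPlus, Set.mem_setOf_eq, muSq, Equiv.prodCongr_apply, Prod.map,
      Equiv.coe_addRight, Equiv.refl_apply]
    omega)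

/-- The restriction of `ν²` to `X⁺`. -/
def nuSqP (hs : 2 ∣ s) (hs0 : s ≠ 0) : Equiv.Perm (XPlus r s) :=
  (nuSq r s).subtypePerm (by
    intro x
    have h := val_add_two_mod_two s hs hs0 x.2
    simp only [XPlus, Set.mem_setOf_eq, nuSq, Equiv.prodCongr_apply, Prod.map,
      Equiv.coe_addRight, Equiv.refl_apply]
    omega)

/-- The restriction of `μν` to `X⁺`. -/
def muNuP (hr : 2 ∣ r) (hr0 : r ≠ 0) (hs : 2 ∣ s) (hs0 : s ≠ 0) : Equiv.Perm (XPlus r s) :=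
  (muNu r s).subtypePerm (by
    intro x
    have h1 := val_add_one_mod_two r hr hr0 x.1
    have h2 := val_add_one_mod_two s hs hs0 x.2
    simp only [XPlus, Set.mem_setOf_eq, muNu, Equiv.prodCongr_apply, Prod.map,
      Equiv.coe_addRight]
    omega)

/-- The restriction of `σ` to `X⁺`. -/
def sigmaP (hr : 2 ∣ r) (hr0 : r ≠ 0) : Equiv.Perm (XPlus r s) :=
  (sigma r s).subtypePerm (by
    intro x
    have h := val_neg_mod_two r hr hr0 x.1
    simp only [XPlus, Set.mem_setOf_eq, sigma, Equiv.prodCongr_apply, Prod.map,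
      Equiv.neg_apply, Equiv.refl_apply]
    omega)

/-- The restriction of `τ` to `X⁺`. -/
def tauP (hr : 2 ∣ r) (hr0 : r ≠ 0) (hs : 2 ∣ s) (hs0 : s ≠ 0) : Equiv.Perm (XPlus r s) :=
  (tau r s).subtypePerm (by
    intro x
    have h1 := val_neg_mod_two r hr hr0 x.1
    have h2 := val_neg_mod_two s hs hs0 x.2
    simp only [XPlus, Set.mem_setOf_eq, tau, Equiv.prodCongr_apply, Prod.map,
      Equiv.neg_apply]
    omega)

/-- The restriction of `σμν` to `X⁺`. -/
def sigmaMuNuP (hr : 2 ∣ r) (hr0 : r ≠ 0) (hs : 2 ∣ s) (hs0 : s ≠ 0) :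
    Equiv.Perm (XPlus r s) :=
  (sigmaMuNu r s).subtypePerm (by
    intro x
    have h1 := val_neg_mod_two r hr hr0 (x.1 + 1)
    have h2 := val_add_one_mod_two r hr hr0 x.1
    have h3 := val_add_one_mod_two s hs hs0 x.2
    simp only [XPlus, Set.mem_setOf_eq, sigmaMuNu, Equiv.prodCongr_apply, Prod.map,
      Equiv.trans_apply, Equiv.coe_addRight, Equiv.neg_apply]
    omega)

/-- `G⁺(r,s) = ⟨μ², μν, σ⟩` acting on `X⁺`. -/
def GPlusGroup (hr : 2 ∣ r) (hr0 : r ≠ 0) (hs : 2 ∣ s) (hs0 : s ≠ 0) :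
    Subgroup (Equiv.Perm (XPlus r s)) :=
  Subgroup.closure {muSqP r s hr hr0, muNuP r s hr hr0 hs hs0, sigmaP r s hr hr0}

/-- `H⁺(r,s) = ⟨μ², σμν, τ⟩` acting on `X⁺`. -/
def HPlusGroup (hr : 2 ∣ r) (hr0 : r ≠ 0) (hs : 2 ∣ s) (hs0 : s ≠ 0) :
    Subgroup (Equiv.Perm (XPlus r s)) :=
  Subgroup.closure
    {muSqP r s hr hr0, sigmaMuNuP r s hr hr0 hs hs0, tauP r s hr hr0 hs hs0}

end plusPerms

/-! ### The standard double cover `Γ₂(r,s)` -/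

/-- Adjacency of the double cover: `(i,j)_δ ~ (i ± 1, j ± 1)_{δ+1}`. -/
def gamma2Rel (r s : ℕ) (x y : (ZMod r × ZMod s) × ZMod 2) : Prop :=
  (y.1.1 = x.1.1 + 1 ∨ y.1.1 = x.1.1 - 1) ∧ (y.1.2 = x.1.2 + 1 ∨ y.1.2 = x.1.2 - 1) ∧
    y.2 = x.2 + 1

/-- `Γ₂(r,s)`, the standard double cover of `Γ(r,s)`. -/
def Gamma2 (r s : ℕ) : SimpleGraph ((ZMod r × ZMod s) × ZMod 2) :=
  SimpleGraph.fromRel (gamma2Rel r s)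

/-- `μ : (i,j)_δ ↦ (i+1, j)_δ` on the double cover. -/
def muD (r s : ℕ) : Equiv.Perm ((ZMod r × ZMod s) × ZMod 2) :=
  (mu r s).prodCongr (Equiv.refl (ZMod 2))

/-- `ν : (i,j)_δ ↦ (i, j+1)_δ` on the double cover. -/
def nuD (r s : ℕ) : Equiv.Perm ((ZMod r × ZMod s) × ZMod 2) :=
  (nu r s).prodCongr (Equiv.refl (ZMod 2))

/-- `σ : (i,j)_δ ↦ (i, -j)_{δ+1}` on the double cover. -/
def sigmaD (r s : ℕ) : Equiv.Perm ((ZMod r × ZMod s) × ZMod 2) :=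
  ((Equiv.refl (ZMod r)).prodCongr (Equiv.neg (ZMod s))).prodCongr
    (Equiv.addRight (1 : ZMod 2))

/-- `τ : (i,j)_δ ↦ (-i, -j)_δ` on the double cover. -/
def tauD (r s : ℕ) : Equiv.Perm ((ZMod r × ZMod s) × ZMod 2) :=
  (tau r s).prodCongr (Equiv.refl (ZMod 2))

/-- `G₂(r,s) = ⟨μ, ν, σ, τ⟩` on the double cover. -/
def G2group (r s : ℕ) : Subgroup (Equiv.Perm ((ZMod r × ZMod s) × ZMod 2)) :=
  Subgroup.closure {muD r s, nuD r s, sigmaD r s, tauD r s}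




/-! ### Auxiliary lemmas for Statement 10 -/

private lemma elem_of_card_two {H : Type*} [Group H] (L : Subgroup H) (hc : Nat.card L = 2)
    {g : H} (hg : g ∈ L) (hg1 : g ≠ 1) : ∀ l ∈ L, l = 1 ∨ l = g := by
  classical
  intro l hl
  by_contra hcon
  push_neg at hcon
  obtain ⟨hl1, hlg⟩ := hcon
  have hfin : Finite L := Nat.finite_of_card_ne_zero (by omega)
  haveI := Fintype.ofFinite L
  have h3 : ({(1 : L), ⟨g, hg⟩, ⟨l, hl⟩} : Finset L).card = 3 := by
    rw [Finset.card_insert_of_notMem, Finset.card_insert_of_notMem, Finset.card_singleton]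
    · simp only [Finset.mem_singleton]
      intro h
      exact hlg (by simpa [Subtype.ext_iff] using h.symm)
    · simp only [Finset.mem_insert, Finset.mem_singleton]
      push_neg
      constructor
      · intro h; exact hg1 (by simpa [Subtype.ext_iff] using h.symm)
      · intro h; exact hl1 (by simpa [Subtype.ext_iff] using h.symm)
  have hle := Finset.card_le_univ ({(1 : L), ⟨g, hg⟩, ⟨l, hl⟩} : Finset L)
  rw [h3] at hle
  rw [Nat.card_eq_fintype_card] at hc
  omega

private lemma mk_eq_iff (L : Subgroup (Equiv.Perm V)) {g : Equiv.Perm V}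
    (hg : g ∈ L) (hL : ∀ l ∈ L, l = 1 ∨ l = g) (x y : V) :
    Quotient.mk (orbitSetoid L) x = Quotient.mk (orbitSetoid L) y ↔ x = y ∨ x = g y := by
  constructor
  · intro h
    have h' : x ∈ MulAction.orbit L y := Quotient.exact h
    obtain ⟨⟨l, hl⟩, hlx⟩ := MulAction.mem_orbit_iff.mp h'
    rcases hL l hl with rfl | rfl
    · left; simpa using hlx.symm
    · right; simpa using hlx.symm
  · rintro (rfl | rfl)
    · rfl
    · exact Quotient.sound
        (show (g y) ∈ MulAction.orbit L y from MulAction.mem_orbit_iff.mpr ⟨⟨g, hg⟩, rfl⟩)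

private lemma no_three {Δ : SimpleGraph W} (h : IsoCycle Δ)
    {d a b c : W} (hab : a ≠ b) (hac : a ≠ c) (hbc : b ≠ c)
    (ha : Δ.Adj d a) (hb : Δ.Adj d b) (hc : Δ.Adj d c) : False := by
  obtain ⟨m, hm, ⟨e⟩⟩ := h
  obtain ⟨n, rfl⟩ : ∃ n, m = n + 2 := ⟨m - 2, by omega⟩
  have Ha : (cycleGraph (n + 2)).Adj (e d) (e a) := e.map_adj_iff.mpr ha
  have Hb : (cycleGraph (n + 2)).Adj (e d) (e b) := e.map_adj_iff.mpr hb
  have Hc : (cycleGraph (n + 2)).Adj (e d) (e c) := e.map_adj_iff.mpr hc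
  have Ha' : e a ∈ (cycleGraph (n + 2)).neighborSet (e d) := Ha
  have Hb' : e b ∈ (cycleGraph (n + 2)).neighborSet (e d) := Hb
  have Hc' : e c ∈ (cycleGraph (n + 2)).neighborSet (e d) := Hc
  rw [cycleGraph_neighborSet, Set.mem_insert_iff, Set.mem_singleton_iff] at Ha' Hb' Hc'
  have inj := e.toEquiv.injective
  rcases Ha' with h1 | h1 <;> rcases Hb' with h2 | h2 <;> rcases Hc' with h3 | h3 <;>
    first
      | exact hab (inj (h1.trans h2.symm))
      | exact hac (inj (h1.trans h3.symm))
      | exact hbc (inj (h2.trans h3.symm))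


private lemma zdvd {r : ℕ} {k : ℕ} (h : ((k : ℕ) : ZMod r) = 0) : r ∣ k :=
  (ZMod.natCast_eq_zero_iff _ _).mp h

private lemma zmod_basic {r : ℕ} (hr : 3 ≤ r) :
    (1 : ZMod r) ≠ 0 ∧ (-1 : ZMod r) ≠ 0 ∧ (1 : ZMod r) ≠ -1 ∧ (2 : ZMod r) ≠ 0 := by
  refine ⟨fun h => ?_, fun h => ?_, fun h => ?_, fun h => ?_⟩
  · have := Nat.le_of_dvd one_pos (zdvd (r := r) (k := 1) (by push_cast; linear_combination h))
    omega
  · have := Nat.le_of_dvd one_pos (zdvd (r := r) (k := 1) (by push_cast; linear_combination -h))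
    omega
  · have := zdvd (r := r) (k := 2) (by push_cast; linear_combination h)
    have := Nat.le_of_dvd (by norm_num) this
    omega
  · have := zdvd (r := r) (k := 2) (by push_cast; linear_combination h)
    have := Nat.le_of_dvd (by norm_num) this
    omega

private lemma eq_three {r : ℕ} (hr : 3 ≤ r) {u a : ZMod r}
    (hu : u = 1 ∨ u = -1) (ha : a = 1 ∨ a = -1)
    (h : u = a + 1 ∨ u = a - 1) : r = 3 := by
  have key : ∀ k : ℕ, ((k : ℕ) : ZMod r) = 0 → k ≠ 0 → k < 3 → False := by
    intro k hk hk0 hk3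
    have := Nat.le_of_dvd (Nat.pos_of_ne_zero hk0) (zdvd hk)
    omega
  rcases hu with rfl | rfl <;> rcases ha with h' | h' <;> rw [h'] at h <;> rcases h with h | h
  · exact absurd (key 1 (by push_cast; linear_combination -h) one_ne_zero (by norm_num)) not_false
  · exact absurd (key 1 (by push_cast; linear_combination h) one_ne_zero (by norm_num)) not_false
  · exact absurd (key 1 (by push_cast; linear_combination h) one_ne_zero (by norm_num)) not_false
  · have : ((3 : ℕ) : ZMod r) = 0 := by push_cast; linear_combination h
    have h3 := Nat.le_of_dvd (by norm_num) (zdvd this)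
    omega
  · have : ((3 : ℕ) : ZMod r) = 0 := by push_cast; linear_combination -h
    have h3 := Nat.le_of_dvd (by norm_num) (zdvd this)
    omega
  · exact absurd (key 1 (by push_cast; linear_combination -h) one_ne_zero (by norm_num)) not_false
  · exact absurd (key 1 (by push_cast; linear_combination -h) one_ne_zero (by norm_num)) not_false
  · exact absurd (key 1 (by push_cast; linear_combination h) one_ne_zero (by norm_num)) not_false

private lemma zero_or_two {r : ℕ} (hr : 3 ≤ r) {a : ZMod r}
    (h1 : a + 1 = 1 ∨ a + 1 = -1) (h2 : a - 1 = 1 ∨ a - 1 = -1) :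
    a = 0 ∨ (r = 4 ∧ a = 2) := by
  obtain ⟨hb1, hb2, hb3, hb4⟩ := zmod_basic hr
  rcases h1 with h1 | h1 <;> rcases h2 with h2 | h2
  · exfalso; apply hb4; linear_combination h1 - h2
  · left; linear_combination h1
  · have h4 : ((4 : ℕ) : ZMod r) = 0 := by push_cast; linear_combination h1 - h2
    have hdvd := zdvd h4
    have hrle : r ≤ 4 := Nat.le_of_dvd (by norm_num) hdvd
    have hr4 : r = 4 := by
      interval_cases r
      · exact absurd hdvd (by norm_num)
      · rfl
    refine Or.inr ⟨hr4, by linear_combination h2⟩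
  · exfalso; apply hb4; linear_combination h1 - h2

private lemma gamma_adj {r s : ℕ} {x y : ZMod r × ZMod s} :
    (Gamma r s).Adj x y ↔
      x ≠ y ∧ (y.1 = x.1 + 1 ∨ y.1 = x.1 - 1) ∧ (y.2 = x.2 + 1 ∨ y.2 = x.2 - 1) := by
  show (SimpleGraph.fromRel _).Adj x y ↔ _
  rw [SimpleGraph.fromRel_adj]
  unfold gammaRel
  constructor
  · rintro ⟨hne, h | h⟩
    · exact ⟨hne, h⟩
    · refine ⟨hne, ?_, ?_⟩
      · rcases h.1 with h1 | h1
        · right; rw [h1]; ring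
        · left; rw [h1]; ring
      · rcases h.2 with h1 | h1
        · right; rw [h1]; ring
        · left; rw [h1]; ring
  · rintro ⟨hne, h⟩; exact ⟨hne, Or.inl h⟩


private lemma key {r s : ℕ} (hr : 3 ≤ r) (hs : 3 ≤ s)
    (G : Subgroup (Equiv.Perm (ZMod r × ZMod s)))
    (hAut : ∀ g ∈ G, ∀ x y : ZMod r × ZMod s,
      (Gamma r s).Adj (g x) (g y) ↔ (Gamma r s).Adj x y)
    (hTrans : ∀ x y : ZMod r × ZMod s, ∃ g ∈ G, g x = y)
    (L : Subgroup (Equiv.Perm (ZMod r × ZMod s)))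
    (hLnormal : NormalIn L G) (hLcard : Nat.card L = 2)
    (hcyc : IsoCycle (quotientGraph (Gamma r s) L))
    {g : Equiv.Perm (ZMod r × ZMod s)} (hgL : g ∈ L) (hg1 : g ≠ 1) :
    (r = 4 ∨ s = 4) ∧
      (g ((0 : ZMod r), (0 : ZMod s)) = ((2 : ZMod r), (0 : ZMod s)) ∨
       g ((0 : ZMod r), (0 : ZMod s)) = ((2 : ZMod r), (2 : ZMod s)) ∨
       g ((0 : ZMod r), (0 : ZMod s)) = ((0 : ZMod r), (2 : ZMod s))) := by
  classical
  haveI : NeZero r := ⟨by omega⟩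
  haveI : NeZero s := ⟨by omega⟩
  obtain ⟨hr1, hr2, hr3, hr4⟩ := zmod_basic hr
  obtain ⟨hs1, hs2, hs3, hs4⟩ := zmod_basic hs
  have hmem2 := elem_of_card_two L hLcard hgL hg1
  have hgG : g ∈ G := hLnormal.1 hgL
  -- g commutes with every element of G
  have hcomm : ∀ h ∈ G, ∀ x, h (g x) = g (h x) := by
    intro h hh x
    have h1 : h * g * h⁻¹ ∈ L := hLnormal.2 h hh g hgL
    rcases hmem2 _ h1 with he | he
    · exfalso
      apply hg1
      have : h * g = h := by
        have := congrArg (fun z => z * h) he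
        simpa [mul_assoc] using this
      exact mul_left_cancel (a := h) (by simpa using this)
    · have hgh : h * g = g * h := by
        have := congrArg (fun z => z * h) he
        simpa [mul_assoc] using this
      calc h (g x) = (h * g) x := rfl
        _ = (g * h) x := by rw [hgh]
        _ = g (h x) := rfl
  have hg2 : g * g = 1 := by
    rcases hmem2 _ (L.mul_mem hgL hgL) with he | he
    · exact he
    · exact absurd (mul_left_cancel (a := g) (show g * g = g * 1 by rw [mul_one]; exact he)) hg1
  have hginv : ∀ x, g (g x) = x := by
    intro x
    calc g (g x) = (g * g) x := rfl
      _ = x := by rw [hg2]; rfl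
  -- g has no fixed point
  have hfpf : ∀ x, g x ≠ x := by
    intro x hx
    apply hg1
    apply Equiv.ext
    intro y
    obtain ⟨h, hh, hxy⟩ := hTrans x y
    have hc := hcomm h hh x
    rw [hx, hxy] at hc
    rw [Equiv.Perm.one_apply, ← hc]
  have hgadj : ∀ x y, (Gamma r s).Adj (g x) (g y) ↔ (Gamma r s).Adj x y := hAut g hgG
  have hmk := mk_eq_iff L hgL hmem2
  -- quotient adjacency
  have hQadj : ∀ x y : ZMod r × ZMod s,
      Quotient.mk (orbitSetoid L) x ≠ Quotient.mk (orbitSetoid L) y →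
      (Gamma r s).Adj x y →
      (quotientGraph (Gamma r s) L).Adj
        (Quotient.mk (orbitSetoid L) x) (Quotient.mk (orbitSetoid L) y) := by
    intro x y hne hadj
    show (SimpleGraph.fromRel _).Adj _ _
    rw [SimpleGraph.fromRel_adj]
    exact ⟨hne, Or.inl ⟨x, y, rfl, rfl, hadj⟩⟩
  -- evenness of r * s
  have heven : 2 ∣ r * s := by
    have hsup : ((Equiv.Perm.support g)ᶜ : Finset (ZMod r × ZMod s)) = ∅ := by
      ext x
      simp [Equiv.Perm.mem_support, hfpf x]
    haveI : Fact (Nat.Prime 2) := ⟨Nat.prime_two⟩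
    have hmod := Equiv.Perm.card_compl_support_modEq (p := 2) (n := 1) (σ := g)
      (by rw [pow_one, pow_two, hg2])
    rw [hsup] at hmod
    simp only [Finset.card_empty] at hmod
    have : (2 : ℕ) ∣ Fintype.card (ZMod r × ZMod s) := (Nat.modEq_zero_iff_dvd.mp hmod.symm)
    rwa [Fintype.card_prod, ZMod.card, ZMod.card] at this
  -- adjacency to the origin
  have hadj0 : ∀ z : ZMod r × ZMod s,
      (Gamma r s).Adj ((0 : ZMod r), (0 : ZMod s)) z ↔
        (z.1 = 1 ∨ z.1 = -1) ∧ (z.2 = 1 ∨ z.2 = -1) := by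
    intro z
    rw [gamma_adj]
    constructor
    · rintro ⟨-, h1, h2⟩
      constructor
      · rcases h1 with h | h
        · left; rw [h]; ring
        · right; rw [h]; ring
      · rcases h2 with h | h
        · left; rw [h]; ring
        · right; rw [h]; ring
    · rintro ⟨h1, h2⟩
      refine ⟨?_, ?_, ?_⟩
      · intro h
        rcases h1 with h' | h' <;> rw [← h] at h'
        · exact hr1 h'.symm
        · exact hr2 h'.symm
      · rcases h1 with h | h
        · left; rw [h]; ring
        · right; rw [h]; ring
      · rcases h2 with h | h
        · left; rw [h]; ring
        · right; rw [h]; ring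
  set o : ZMod r × ZMod s := ((0 : ZMod r), (0 : ZMod s)) with ho
  have hgo : g o = ((g o).1, (g o).2) := rfl
  by_cases hB : (Gamma r s).Adj o (g o)
  · -- Case B : leads to contradiction
    exfalso
    obtain ⟨ha, hb⟩ := (hadj0 (g o)).mp hB
    set a := (g o).1
    set b := (g o).2
    have hna : -a = 1 ∨ -a = -1 := by rcases ha with h | h <;> rw [h] <;> simp
    have hnb : -b = 1 ∨ -b = -1 := by rcases hb with h | h <;> rw [h] <;> simp
    have haa : a ≠ -a := by
      intro h
      rcases ha with h' | h' <;> rw [h'] at h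
      · exact hr4 (by linear_combination h)
      · exact hr4 (by linear_combination -h)
    have hbb : b ≠ -b := by
      intro h
      rcases hb with h' | h' <;> rw [h'] at h
      · exact hs4 (by linear_combination h)
      · exact hs4 (by linear_combination -h)
    have hane : a ≠ 0 := by rcases ha with h | h <;> rw [h] <;> [exact hr1; exact hr2]
    have hbne : b ≠ 0 := by rcases hb with h | h <;> rw [h] <;> [exact hs1; exact hs2]
    set y₁ : ZMod r × ZMod s := (a, -b)
    set y₂ : ZMod r × ZMod s := (-a, b)
    set y₃ : ZMod r × ZMod s := (-a, -b)
    have hy1 : (Gamma r s).Adj o y₁ := (hadj0 y₁).mpr ⟨ha, hnb⟩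
    have hy2 : (Gamma r s).Adj o y₂ := (hadj0 y₂).mpr ⟨hna, hb⟩
    have hy3 : (Gamma r s).Adj o y₃ := (hadj0 y₃).mpr ⟨hna, hnb⟩
    -- each yᵢ differs from o and from g o
    have hne_o_go : ∀ z : ZMod r × ZMod s, z.1 = 1 ∨ z.1 = -1 → z ≠ o := by
      intro z hz h
      rw [h] at hz
      rcases hz with h' | h'
      · exact hr1 h'.symm
      · exact hr2 h'.symm
    have hmkne : ∀ z : ZMod r × ZMod s, z ≠ o → z ≠ g o →
        Quotient.mk (orbitSetoid L) z ≠ Quotient.mk (orbitSetoid L) o := by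
      intro z h1 h2 h
      rcases (hmk z o).mp h with h' | h'
      · exact h1 h'
      · exact h2 h'
    have hy1o : y₁ ≠ o := hne_o_go y₁ ha
    have hy2o : y₂ ≠ o := hne_o_go y₂ hna
    have hy3o : y₃ ≠ o := hne_o_go y₃ hna
    have hy1go : y₁ ≠ g o := fun h => hbb (congrArg Prod.snd h).symm
    have hy2go : y₂ ≠ g o := fun h => haa (congrArg Prod.fst h).symm
    have hy3go : y₃ ≠ g o := fun h => haa (congrArg Prod.fst h).symm
    have hc1 := hmkne y₁ hy1o hy1go
    have hc2 := hmkne y₂ hy2o hy2go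
    have hc3 := hmkne y₃ hy3o hy3go
    have hQ1 := hQadj o y₁ (Ne.symm hc1) hy1
    have hQ2 := hQadj o y₂ (Ne.symm hc2) hy2
    have hQ3 := hQadj o y₃ (Ne.symm hc3) hy3
    -- distinctness of the yᵢ
    have hy12 : y₁ ≠ y₂ := fun h => haa (congrArg Prod.fst h)
    have hy13 : y₁ ≠ y₃ := fun h => haa (congrArg Prod.fst h)
    have hy23 : y₂ ≠ y₃ := fun h => hbb (congrArg Prod.snd h)
    -- two of the classes must coincide
    have hpair : ∃ z w : ZMod r × ZMod s, (Gamma r s).Adj o z ∧ (Gamma r s).Adj o w ∧ z = g w := by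
      by_cases h12 : Quotient.mk (orbitSetoid L) y₁ = Quotient.mk (orbitSetoid L) y₂
      · rcases (hmk y₁ y₂).mp h12 with h | h
        · exact absurd h hy12
        · exact ⟨y₁, y₂, hy1, hy2, h⟩
      by_cases h13 : Quotient.mk (orbitSetoid L) y₁ = Quotient.mk (orbitSetoid L) y₃
      · rcases (hmk y₁ y₃).mp h13 with h | h
        · exact absurd h hy13
        · exact ⟨y₁, y₃, hy1, hy3, h⟩
      by_cases h23 : Quotient.mk (orbitSetoid L) y₂ = Quotient.mk (orbitSetoid L) y₃
      · rcases (hmk y₂ y₃).mp h23 with h | h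
        · exact absurd h hy23
        · exact ⟨y₂, y₃, hy2, hy3, h⟩
      · exact absurd (no_three hcyc h12 h13 h23 hQ1 hQ2 hQ3) not_false
    obtain ⟨z, w, hz, hw, hzw⟩ := hpair
    have hzadj : (Gamma r s).Adj (g o) z := by
      rw [hzw]
      exact (hgadj o w).mpr hw
    obtain ⟨hz1, hz2⟩ := (hadj0 z).mp hz
    obtain ⟨-, hz1', hz2'⟩ := gamma_adj.mp hzadj
    have hr3' : r = 3 := eq_three hr hz1 ha hz1'
    have hs3' : s = 3 := eq_three hs hz2 hb hz2'
    rw [hr3', hs3'] at heven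
    omega
  · -- Case A
    -- claim : g maps neighbours of o to neighbours of o
    have claim : ∀ y : ZMod r × ZMod s, (Gamma r s).Adj o y → (Gamma r s).Adj o (g y) := by
      intro y hy
      by_contra hgy
      obtain ⟨ha, hb⟩ := (hadj0 y).mp hy
      set a := y.1
      set b := y.2
      have hna : -a = 1 ∨ -a = -1 := by rcases ha with h | h <;> rw [h] <;> simp
      have hnb : -b = 1 ∨ -b = -1 := by rcases hb with h | h <;> rw [h] <;> simp
      have haa : a ≠ -a := by
        intro h
        rcases ha with h' | h' <;> rw [h'] at h
        · exact hr4 (by linear_combination h)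
        · exact hr4 (by linear_combination -h)
      have hbb : b ≠ -b := by
        intro h
        rcases hb with h' | h' <;> rw [h'] at h
        · exact hs4 (by linear_combination h)
        · exact hs4 (by linear_combination -h)
      set u : ZMod r × ZMod s := (a, -b)
      set v : ZMod r × ZMod s := (-a, b)
      set w : ZMod r × ZMod s := (-a, -b)
      have hyy : y = (a, b) := rfl
      have hu : (Gamma r s).Adj o u := (hadj0 u).mpr ⟨ha, hnb⟩
      have hv : (Gamma r s).Adj o v := (hadj0 v).mpr ⟨hna, hb⟩
      have hw : (Gamma r s).Adj o w := (hadj0 w).mpr ⟨hna, hnb⟩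
      -- none of y,u,v,w equals o or g o
      have hne_go : ∀ z : ZMod r × ZMod s, (Gamma r s).Adj o z → z ≠ g o := by
        intro z hz h
        exact hB (h ▸ hz)
      have hmkne : ∀ z : ZMod r × ZMod s, (Gamma r s).Adj o z →
          Quotient.mk (orbitSetoid L) z ≠ Quotient.mk (orbitSetoid L) o := by
        intro z hz h
        rcases (hmk z o).mp h with h' | h'
        · exact (Gamma r s).loopless.irrefl o (by rwa [h'] at hz)
        · exact hne_go z hz h'
      -- classes of u,v,w are different from class of y
      have hmkyne : ∀ z : ZMod r × ZMod s, (Gamma r s).Adj o z → z ≠ y →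
          Quotient.mk (orbitSetoid L) z ≠ Quotient.mk (orbitSetoid L) y := by
        intro z hz hzy h
        rcases (hmk z y).mp h with h' | h'
        · exact hzy h'
        · exact hgy (h' ▸ hz)
      have huy : u ≠ y := fun h => hbb (congrArg Prod.snd h).symm
      have hvy : v ≠ y := fun h => haa (congrArg Prod.fst h).symm
      have hwy : w ≠ y := fun h => haa (congrArg Prod.fst h).symm
      have huv : u ≠ v := fun h => haa (congrArg Prod.fst h)
      have huw : u ≠ w := fun h => haa (congrArg Prod.fst h)
      have hvw : v ≠ w := fun h => hbb (congrArg Prod.snd h)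
      have hQy := hQadj o y (Ne.symm (hmkne y hy)) hy
      have hQu := hQadj o u (Ne.symm (hmkne u hu)) hu
      have hQv := hQadj o v (Ne.symm (hmkne v hv)) hv
      have hQw := hQadj o w (Ne.symm (hmkne w hw)) hw
      have hcyu := hmkyne u hu huy
      have hcyv := hmkyne v hv hvy
      have hcyw := hmkyne w hw hwy
      by_cases huv' : Quotient.mk (orbitSetoid L) u = Quotient.mk (orbitSetoid L) v
      · have hvgu : v = g u := by
          rcases (hmk v u).mp huv'.symm with h | h
          · exact absurd h (Ne.symm huv)
          · exact h
        by_cases huw' : Quotient.mk (orbitSetoid L) u = Quotient.mk (orbitSetoid L) w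
        · have hwgu : w = g u := by
            rcases (hmk w u).mp huw'.symm with h | h
            · exact absurd h (Ne.symm huw)
            · exact h
          exact hvw (hvgu.trans hwgu.symm)
        · exact no_three hcyc (Ne.symm hcyu) (Ne.symm hcyw) huw' hQy hQu hQw
      · exact no_three hcyc (Ne.symm hcyu) (Ne.symm hcyv) huv' hQy hQu hQv
    -- now use the claim on the two diagonal neighbours of g o
    set a := (g o).1
    set b := (g o).2
    have hgoab : g o = (a, b) := rfl
    have hadjp : (Gamma r s).Adj (g o) (a + 1, b + 1) := by
      rw [gamma_adj]
      refine ⟨?_, ?_, ?_⟩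
      · intro h
        have := congrArg Prod.fst h
        simp only [hgoab] at this
        exact hr1 (by linear_combination -this)
      · left; rw [hgoab]
      · left; rw [hgoab]
    have hadjm : (Gamma r s).Adj (g o) (a - 1, b - 1) := by
      rw [gamma_adj]
      refine ⟨?_, ?_, ?_⟩
      · intro h
        have := congrArg Prod.fst h
        simp only [hgoab] at this
        exact hr1 (by linear_combination this)
      · right; rw [hgoab]
      · right; rw [hgoab]
    have hgadjp : (Gamma r s).Adj o (g (a + 1, b + 1)) := by
      have := (hgadj (g o) (a + 1, b + 1)).mpr hadjp
      rwa [hginv o] at this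
    have hgadjm : (Gamma r s).Adj o (g (a - 1, b - 1)) := by
      have := (hgadj (g o) (a - 1, b - 1)).mpr hadjm
      rwa [hginv o] at this
    have hp := claim _ hgadjp
    have hm := claim _ hgadjm
    rw [hginv] at hp hm
    obtain ⟨hp1, hp2⟩ := (hadj0 _).mp hp
    obtain ⟨hm1, hm2⟩ := (hadj0 _).mp hm
    have har := zero_or_two hr hp1 hm1
    have hbs := zero_or_two hs hp2 hm2
    have hgoo : g o ≠ o := hfpf o
    rcases har with ha0 | ⟨hr4', ha2⟩ <;> rcases hbs with hb0 | ⟨hs4', hb2⟩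
    · exact absurd (by rw [hgoab, ha0, hb0]) hgoo
    · exact ⟨Or.inr hs4', Or.inr (Or.inr (by rw [hgoab, ha0, hb2]))⟩
    · exact ⟨Or.inl hr4', Or.inl (by rw [hgoab, ha2, hb0])⟩
    · exact ⟨Or.inl hr4', Or.inr (Or.inl (by rw [hgoab, ha2, hb2]))⟩


/-- if `G ≤ Aut(Γ(r,s))` is vertex-transitive and `L` is a normal subgroup of
`G` of order `2` whose normal quotient is a cycle, then `r = 4` or `s = 4`, and the
non-identity element of `L` maps `(0,0)` to `(2,0)`, `(2,2)` or `(0,2)`. -/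
theorem stmt10 (r s : ℕ) (hr : 3 ≤ r) (hs : 3 ≤ s)
    (G : Subgroup (Equiv.Perm (ZMod r × ZMod s)))
    (hAut : ∀ g ∈ G, ∀ x y : ZMod r × ZMod s,
      (Gamma r s).Adj (g x) (g y) ↔ (Gamma r s).Adj x y)
    (hTrans : ∀ x y : ZMod r × ZMod s, ∃ g ∈ G, g x = y)
    (L : Subgroup (Equiv.Perm (ZMod r × ZMod s)))
    (hLnormal : NormalIn L G) (hLcard : Nat.card L = 2)
    (hcyc : IsoCycle (quotientGraph (Gamma r s) L)) :
    (r = 4 ∨ s = 4) ∧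
      ∀ g ∈ L, g ≠ 1 →
        g ((0 : ZMod r), (0 : ZMod s)) = ((2 : ZMod r), (0 : ZMod s)) ∨
        g ((0 : ZMod r), (0 : ZMod s)) = ((2 : ZMod r), (2 : ZMod s)) ∨
        g ((0 : ZMod r), (0 : ZMod s)) = ((0 : ZMod r), (2 : ZMod s)) := by
  have hex : ∃ g ∈ L, g ≠ 1 := by
    by_contra hcon
    push_neg at hcon
    have hbot : L = ⊥ := by
      ext l
      simp only [Subgroup.mem_bot]
      exact ⟨fun hl => hcon l hl, fun h => h ▸ L.one_mem⟩
    rw [hbot] at hLcard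
    simp [Nat.card_eq_fintype_card] at hLcard
  obtain ⟨g0, hg0L, hg0⟩ := hex
  refine ⟨(key hr hs G hAut hTrans L hLnormal hLcard hcyc hg0L hg0).1, ?_⟩
  intro g hgL hg1
  exact (key hr hs G hAut hTrans L hLnormal hLcard hcyc hgL hg1).2

end OG4
end

section
/- Let r, s ≥ 3 be integers, let H be a group isomorphic to the dihedral group D_r of order 2r, and let K be a group isomorphic either to the cyclic group C_s of order s or to the dihedral group D_s of order 2s. Set G = H × K and let M be a minimal normal subgroup of G. Then one of the following holds: (a) M ≤ H × {1}, the projection of M to H is a minimal normal subgroup of H, and M is cyclic of order p for some prime p dividing r; (b) M ≤ {1} × K, the projection of M to K is a minimal normal subgroup of K, and M is cyclic of order p for some prime p dividing s; (c) r and s are both even, M is contained in the center of G, and M is cyclic of order 2. -/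
open SimpleGraph

namespace OG4

variable {V : Type*} {W : Type*}

section Proof11

lemma r_inv' {n : ℕ} (i : ZMod n) : (DihedralGroup.r i)⁻¹ = DihedralGroup.r (-i) :=
  inv_eq_of_mul_eq_one_right
    (by rw [DihedralGroup.r_mul_r, add_neg_cancel, DihedralGroup.one_def])

lemma sr_inv' {n : ℕ} (i : ZMod n) : (DihedralGroup.sr i)⁻¹ = DihedralGroup.sr i :=
  inv_eq_of_mul_eq_one_right (DihedralGroup.sr_mul_self i)

lemma exists_pow_prime_orderOf {G : Type*} [Group G] [Finite G] (x : G) (hx : x ≠ 1) :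
    ∃ m : ℕ, (orderOf (x ^ m)).Prime := by
  have hn1 : orderOf x ≠ 1 := by simpa [orderOf_eq_one_iff] using hx
  have hn0 : orderOf x ≠ 0 := (orderOf_pos x).ne'
  have hp := Nat.minFac_prime hn1
  refine ⟨orderOf x / (orderOf x).minFac, ?_⟩
  have hd : orderOf x / (orderOf x).minFac ∣ orderOf x := Nat.div_dvd_of_dvd (Nat.minFac_dvd _)
  rw [orderOf_pow, Nat.gcd_eq_right hd, Nat.div_div_self (Nat.minFac_dvd _) hn0]
  exact hp

lemma zpowers_normal_of_conj {G : Type*} [Group G] {y : G}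
    (h : ∀ g : G, g * y * g⁻¹ ∈ Subgroup.zpowers y) : (Subgroup.zpowers y).Normal := by
  constructor
  intro n hn g
  obtain ⟨k, rfl⟩ := Subgroup.mem_zpowers_iff.mp hn
  have hc : g * y ^ k * g⁻¹ = (g * y * g⁻¹) ^ k := (conj_zpow).symm
  rw [hc]
  exact Subgroup.zpow_mem _ (h g) k

/-- The rotation subgroup of the dihedral group. -/
def rotSub (n : ℕ) : Subgroup (DihedralGroup n) where
  carrier := {x | ∃ i, x = DihedralGroup.r i}
  one_mem' := ⟨0, DihedralGroup.one_def⟩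
  mul_mem' := by rintro _ _ ⟨i, rfl⟩ ⟨j, rfl⟩; exact ⟨i + j, DihedralGroup.r_mul_r i j⟩
  inv_mem' := by rintro _ ⟨i, rfl⟩; exact ⟨-i, r_inv' i⟩

instance rotSub_normal (n : ℕ) : (rotSub n).Normal := by
  constructor
  rintro _ ⟨i, rfl⟩ g
  rcases g with j | j
  · refine ⟨i, ?_⟩
    rw [DihedralGroup.r_mul_r, r_inv', DihedralGroup.r_mul_r]
    congr 1
    ring
  · refine ⟨-i, ?_⟩
    rw [DihedralGroup.sr_mul_r, sr_inv', DihedralGroup.sr_mul_sr]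
    congr 1
    ring

lemma dihedral_minNormal {n : ℕ} (hn : 3 ≤ n) {P : Subgroup (DihedralGroup n)}
    (hP : IsMinimalNormal P) : ∃ p : ℕ, p.Prime ∧ p ∣ n ∧ Nat.card P = p := by
  haveI : NeZero n := ⟨by omega⟩
  obtain ⟨hnorm, hbot, hmin⟩ := hP
  haveI := hnorm
  obtain ⟨x, hxP, hx1⟩ := P.bot_or_exists_ne_one.resolve_left hbot
  rcases hmin (P ⊓ rotSub n) inferInstance inf_le_left with hc | hc
  · exfalso
    rcases x with i | i
    · have hmem : DihedralGroup.r i ∈ P ⊓ rotSub n := ⟨hxP, ⟨i, rfl⟩⟩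
      rw [hc, Subgroup.mem_bot] at hmem
      exact hx1 hmem
    · have h1 : DihedralGroup.r 1 * DihedralGroup.sr i * (DihedralGroup.r 1)⁻¹ ∈ P :=
        hnorm.conj_mem _ hxP _
      rw [r_inv', DihedralGroup.r_mul_sr, DihedralGroup.sr_mul_r] at h1
      have h2 : DihedralGroup.sr i * DihedralGroup.sr (i - 1 + -1) ∈ P := P.mul_mem hxP h1
      rw [DihedralGroup.sr_mul_sr] at h2
      have h3 : DihedralGroup.r (i - 1 + -1 - i) ∈ P ⊓ rotSub n := ⟨h2, ⟨_, rfl⟩⟩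
      rw [hc, Subgroup.mem_bot, DihedralGroup.one_def] at h3
      have h4 : (i - 1 + -1 - i : ZMod n) = 0 := by injection h3
      have h5 : ((2 : ℕ) : ZMod n) = 0 := by push_cast; linear_combination -h4
      have h6 := (ZMod.natCast_eq_zero_iff 2 n).mp h5
      have := Nat.le_of_dvd (by norm_num) h6
      omega
  · have hPR : P ≤ rotSub n := by rw [← hc]; exact inf_le_right
    obtain ⟨m, hm⟩ := exists_pow_prime_orderOf x hx1
    have hyP : x ^ m ∈ P := P.pow_mem hxP m
    have hy1 : x ^ m ≠ 1 := by
      intro h; rw [h, orderOf_one] at hm; exact Nat.not_prime_one hm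
    obtain ⟨k, hk⟩ := hPR hyP
    have hQn : (Subgroup.zpowers (x ^ m)).Normal := by
      apply zpowers_normal_of_conj
      intro g
      rcases g with j | j
      · rw [hk, r_inv', DihedralGroup.r_mul_r, DihedralGroup.r_mul_r]
        have he : j + k + -j = k := by ring
        rw [he, ← hk]
        exact Subgroup.mem_zpowers _
      · rw [hk, sr_inv', DihedralGroup.sr_mul_r, DihedralGroup.sr_mul_sr]
        have he : j - (j + k) = -k := by ring
        rw [he, ← r_inv', ← hk]
        exact (Subgroup.zpowers _).inv_mem (Subgroup.mem_zpowers _)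
    have hQP := hmin _ hQn (Subgroup.zpowers_le.mpr hyP)
    have hQb : Subgroup.zpowers (x ^ m) ≠ ⊥ := by
      intro h
      exact hy1 (by simpa [h, Subgroup.mem_bot] using Subgroup.mem_zpowers (x ^ m))
    have hQ := hQP.resolve_left hQb
    refine ⟨orderOf (x ^ m), hm, ?_, by rw [← hQ, Nat.card_zpowers]⟩
    rw [hk, DihedralGroup.orderOf_r]
    exact Nat.div_dvd_of_dvd (Nat.gcd_dvd_left n k.val)

lemma dihedral_center {n : ℕ} (hn : 3 ≤ n) {z : DihedralGroup n}
    (hz : ∀ g, g * z = z * g) (hz1 : z ≠ 1) : 2 ∣ n ∧ z * z = 1 := by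
  haveI : NeZero n := ⟨by omega⟩
  rcases z with k | k
  · have h1 := hz (DihedralGroup.sr 0)
    rw [DihedralGroup.sr_mul_r, DihedralGroup.r_mul_sr, zero_add] at h1
    have hk : (k : ZMod n) = 0 - k := by injection h1
    have hkk : k + k = 0 := by linear_combination hk
    constructor
    · have hk0 : k ≠ 0 := by
        rintro rfl
        exact hz1 DihedralGroup.one_def.symm
      have hv : (k.val + k.val) % n = 0 := by
        have h2 : (k + k).val = 0 := by rw [hkk, ZMod.val_zero]
        rwa [ZMod.val_add] at h2
      have hlt : k.val < n := ZMod.val_lt k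
      have hne : k.val ≠ 0 := fun h => hk0 ((ZMod.val_eq_zero k).mp h)
      obtain ⟨c, hcc⟩ := Nat.dvd_of_mod_eq_zero hv
      have h7 : k.val + k.val = n := by
        rcases c with _ | _ | c
        · omega
        · omega
        · exfalso; nlinarith
      omega
    · rw [DihedralGroup.r_mul_r, hkk]
      exact DihedralGroup.one_def.symm
  · exfalso
    have h1 := hz (DihedralGroup.r 1)
    rw [DihedralGroup.r_mul_sr, DihedralGroup.sr_mul_r] at h1
    have hk : k - 1 = k + 1 := by injection h1
    have h2 : ((2 : ℕ) : ZMod n) = 0 := by push_cast; linear_combination -hk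
    have h6 := (ZMod.natCast_eq_zero_iff 2 n).mp h2
    have := Nat.le_of_dvd (by norm_num) h6
    omega

lemma minNormal_map {G G' : Type*} [Group G] [Group G'] (e : G ≃* G') {P : Subgroup G}
    (h : IsMinimalNormal P) : IsMinimalNormal (P.map e.toMonoidHom) := by
  obtain ⟨h1, h2, h3⟩ := h
  refine ⟨h1.map _ e.surjective, ?_, ?_⟩
  · intro hb
    apply h2
    have := congrArg (Subgroup.comap e.toMonoidHom) hb
    rwa [Subgroup.comap_map_eq_self_of_injective e.injective, MonoidHom.comap_bot,
      (MonoidHom.ker_eq_bot_iff _).mpr e.injective] at this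
  · intro N hN hle
    have hc : N.comap e.toMonoidHom ≤ P :=
      le_of_le_of_eq (Subgroup.comap_mono hle)
        (Subgroup.comap_map_eq_self_of_injective e.injective P)
    rcases h3 _ (hN.comap _) hc with h | h
    · left
      have := congrArg (Subgroup.map e.toMonoidHom) h
      rwa [Subgroup.map_comap_eq_self_of_surjective e.surjective, Subgroup.map_bot] at this
    · right
      have := congrArg (Subgroup.map e.toMonoidHom) h
      rwa [Subgroup.map_comap_eq_self_of_surjective e.surjective] at this

lemma comm_minNormal {G : Type*} [Group G] [Finite G] (hcomm : ∀ a b : G, a * b = b * a)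
    {P : Subgroup G} (hP : IsMinimalNormal P) :
    ∃ p : ℕ, p.Prime ∧ p ∣ Nat.card G ∧ Nat.card P = p := by
  obtain ⟨hnorm, hbot, hmin⟩ := hP
  obtain ⟨x, hxP, hx1⟩ := P.bot_or_exists_ne_one.resolve_left hbot
  obtain ⟨m, hm⟩ := exists_pow_prime_orderOf x hx1
  have hyP : x ^ m ∈ P := P.pow_mem hxP m
  have hy1 : x ^ m ≠ 1 := by
    intro h; rw [h, orderOf_one] at hm; exact Nat.not_prime_one hm
  have hQn : (Subgroup.zpowers (x ^ m)).Normal := by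
    apply zpowers_normal_of_conj
    intro g
    have : g * x ^ m * g⁻¹ = x ^ m := by rw [hcomm g (x ^ m)]; group
    rw [this]
    exact Subgroup.mem_zpowers _
  have hQ := (hmin _ hQn (Subgroup.zpowers_le.mpr hyP)).resolve_left
    (fun h => hy1 (by simpa [h, Subgroup.mem_bot] using Subgroup.mem_zpowers (x ^ m)))
  exact ⟨orderOf (x ^ m), hm, orderOf_dvd_natCard _, by rw [← hQ, Nat.card_zpowers]⟩

lemma minNormal_prod_left {A B : Type*} [Group A] [Group B] {M : Subgroup (A × B)}
    (hM : IsMinimalNormal M) (hle : M ≤ (⊤ : Subgroup A).prod ⊥) :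
    IsMinimalNormal (M.map (MonoidHom.fst A B)) ∧
      Nat.card M = Nat.card (M.map (MonoidHom.fst A B)) := by
  obtain ⟨hnorm, hbot, hmin⟩ := hM
  have hmem : ∀ x : A × B, x ∈ M → x.2 = 1 := fun x hx =>
    Subgroup.mem_bot.mp (Subgroup.mem_prod.mp (hle hx)).2
  have hMP : ∀ a : A, a ∈ M.map (MonoidHom.fst A B) ↔ (a, (1 : B)) ∈ M := by
    intro a
    constructor
    · rintro ⟨⟨c, d⟩, hm, rfl⟩
      have hd : d = 1 := hmem _ hm
      exact hd ▸ hm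
    · intro h; exact ⟨(a, 1), h, rfl⟩
  have hPnorm : (M.map (MonoidHom.fst A B)).Normal := hnorm.map _ Prod.fst_surjective
  have hPbot : M.map (MonoidHom.fst A B) ≠ ⊥ := by
    intro h
    apply hbot
    rw [Subgroup.eq_bot_iff_forall]
    rintro ⟨a, b⟩ hx
    have ha : a ∈ M.map (MonoidHom.fst A B) := ⟨_, hx, rfl⟩
    rw [h, Subgroup.mem_bot] at ha
    exact Prod.ext_iff.mpr ⟨ha, hmem _ hx⟩
  have hPmin : ∀ N : Subgroup A, N.Normal → N ≤ M.map (MonoidHom.fst A B) →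
      N = ⊥ ∨ N = M.map (MonoidHom.fst A B) := by
    intro N hN hle'
    haveI := hN
    have h2 : N.prod ⊥ ≤ M := by
      rintro ⟨a, b⟩ h
      rw [Subgroup.mem_prod] at h
      obtain ⟨h11, h12⟩ := h
      rw [Subgroup.mem_bot] at h12
      subst h12
      exact (hMP a).mp (hle' h11)
    rcases hmin (N.prod ⊥) inferInstance h2 with h | h
    · left
      rw [Subgroup.eq_bot_iff_forall]
      intro x hx
      have hx2 : (x, (1 : B)) ∈ N.prod ⊥ := Subgroup.mem_prod.mpr ⟨hx, Subgroup.mem_bot.mpr rfl⟩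
      rw [h, Subgroup.mem_bot] at hx2
      exact (Prod.ext_iff.mp hx2).1
    · right
      apply le_antisymm hle'
      intro a ha
      have hx2 : (a, (1 : B)) ∈ N.prod ⊥ := by rw [h]; exact (hMP a).mp ha
      exact (Subgroup.mem_prod.mp hx2).1
  refine ⟨⟨hPnorm, hPbot, hPmin⟩, Nat.card_congr ?_⟩
  exact
    { toFun := fun x => ⟨x.1.1, ⟨x.1, x.2, rfl⟩⟩
      invFun := fun a => ⟨(a.1, 1), (hMP a.1).mp a.2⟩
      left_inv := fun x => Subtype.ext (Prod.ext_iff.mpr ⟨rfl, (hmem _ x.2).symm⟩)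
      right_inv := fun a => rfl }

lemma minNormal_prod_right {A B : Type*} [Group A] [Group B] {M : Subgroup (A × B)}
    (hM : IsMinimalNormal M) (hle : M ≤ (⊥ : Subgroup A).prod ⊤) :
    IsMinimalNormal (M.map (MonoidHom.snd A B)) ∧
      Nat.card M = Nat.card (M.map (MonoidHom.snd A B)) := by
  obtain ⟨hnorm, hbot, hmin⟩ := hM
  have hmem : ∀ x : A × B, x ∈ M → x.1 = 1 := fun x hx =>
    Subgroup.mem_bot.mp (Subgroup.mem_prod.mp (hle hx)).1
  have hMP : ∀ b : B, b ∈ M.map (MonoidHom.snd A B) ↔ ((1 : A), b) ∈ M := by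
    intro b
    constructor
    · rintro ⟨⟨c, d⟩, hm, rfl⟩
      have hd : c = 1 := hmem _ hm
      exact hd ▸ hm
    · intro h; exact ⟨(1, b), h, rfl⟩
  have hPnorm : (M.map (MonoidHom.snd A B)).Normal := hnorm.map _ Prod.snd_surjective
  have hPbot : M.map (MonoidHom.snd A B) ≠ ⊥ := by
    intro h
    apply hbot
    rw [Subgroup.eq_bot_iff_forall]
    rintro ⟨a, b⟩ hx
    have ha : b ∈ M.map (MonoidHom.snd A B) := ⟨_, hx, rfl⟩
    rw [h, Subgroup.mem_bot] at ha
    exact Prod.ext_iff.mpr ⟨hmem _ hx, ha⟩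
  have hPmin : ∀ N : Subgroup B, N.Normal → N ≤ M.map (MonoidHom.snd A B) →
      N = ⊥ ∨ N = M.map (MonoidHom.snd A B) := by
    intro N hN hle'
    haveI := hN
    have h2 : (⊥ : Subgroup A).prod N ≤ M := by
      rintro ⟨a, b⟩ h
      rw [Subgroup.mem_prod] at h
      obtain ⟨h11, h12⟩ := h
      rw [Subgroup.mem_bot] at h11
      subst h11
      exact (hMP b).mp (hle' h12)
    rcases hmin ((⊥ : Subgroup A).prod N) inferInstance h2 with h | h
    · left
      rw [Subgroup.eq_bot_iff_forall]
      intro x hx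
      have hx2 : ((1 : A), x) ∈ (⊥ : Subgroup A).prod N :=
        Subgroup.mem_prod.mpr ⟨Subgroup.mem_bot.mpr rfl, hx⟩
      rw [h, Subgroup.mem_bot] at hx2
      exact (Prod.ext_iff.mp hx2).2
    · right
      apply le_antisymm hle'
      intro b hb
      have hx2 : ((1 : A), b) ∈ (⊥ : Subgroup A).prod N := by rw [h]; exact (hMP b).mp hb
      exact (Subgroup.mem_prod.mp hx2).2
  refine ⟨⟨hPnorm, hPbot, hPmin⟩, Nat.card_congr ?_⟩
  exact
    { toFun := fun x => ⟨x.1.2, ⟨x.1, x.2, rfl⟩⟩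
      invFun := fun b => ⟨(1, b.1), (hMP b.1).mp b.2⟩
      left_inv := fun x => Subtype.ext (Prod.ext_iff.mpr ⟨(hmem _ x.2).symm, rfl⟩)
      right_inv := fun b => rfl }

end Proof11

/-- minimal normal subgroups of `D_r × C_s` and `D_r × D_s`. -/
theorem stmt11 (r s : ℕ) (hr : 3 ≤ r) (hs : 3 ≤ s) (H K : Type*) [Group H] [Group K]
    (hH : Nonempty (H ≃* DihedralGroup r))
    (hK : Nonempty (K ≃* Multiplicative (ZMod s)) ∨ Nonempty (K ≃* DihedralGroup s))
    (M : Subgroup (H × K)) (hM : IsMinimalNormal M) :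
    (M ≤ (⊤ : Subgroup H).prod (⊥ : Subgroup K) ∧
      IsMinimalNormal (M.map (MonoidHom.fst H K)) ∧
      IsCyclic M ∧ ∃ p : ℕ, p.Prime ∧ p ∣ r ∧ Nat.card M = p) ∨
    (M ≤ (⊥ : Subgroup H).prod (⊤ : Subgroup K) ∧
      IsMinimalNormal (M.map (MonoidHom.snd H K)) ∧
      IsCyclic M ∧ ∃ p : ℕ, p.Prime ∧ p ∣ s ∧ Nat.card M = p) ∨
    (2 ∣ r ∧ 2 ∣ s ∧ M ≤ Subgroup.center (H × K) ∧ IsCyclic M ∧ Nat.card M = 2) := by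
  obtain ⟨eH⟩ := hH
  haveI : NeZero r := ⟨by omega⟩
  haveI : NeZero s := ⟨by omega⟩
  haveI : Finite H := Finite.of_equiv _ eH.symm.toEquiv
  haveI : Finite K := by
    obtain ⟨⟨eK⟩⟩ | ⟨⟨eK⟩⟩ := hK
    · exact Finite.of_equiv _ eK.symm.toEquiv
    · exact Finite.of_equiv _ eK.symm.toEquiv
  haveI := hM.1
  rcases hM.2.2 (M ⊓ (⊤ : Subgroup H).prod ⊥) inferInstance inf_le_left with hA | hA
  swap
  · -- M ≤ H × 1
    have hle : M ≤ (⊤ : Subgroup H).prod ⊥ := by rw [← hA]; exact inf_le_right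
    obtain ⟨hPmin, hcard⟩ := minNormal_prod_left hM hle
    obtain ⟨p, hp, hpr, hpc⟩ := dihedral_minNormal hr (minNormal_map eH hPmin)
    have hcard2 : Nat.card (M.map (MonoidHom.fst H K)) = p := by
      rw [← hpc]
      exact Nat.card_congr
        (Subgroup.equivMapOfInjective _ eH.toMonoidHom eH.injective).toEquiv
    have hMc : Nat.card M = p := hcard.trans hcard2
    haveI : Fact p.Prime := ⟨hp⟩
    exact Or.inl ⟨hle, hPmin, isCyclic_of_prime_card hMc, p, hp, hpr, hMc⟩
  rcases hM.2.2 (M ⊓ (⊥ : Subgroup H).prod ⊤) inferInstance inf_le_left with hB | hB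
  swap
  · -- M ≤ 1 × K
    have hle : M ≤ (⊥ : Subgroup H).prod ⊤ := by rw [← hB]; exact inf_le_right
    obtain ⟨hPmin, hcard⟩ := minNormal_prod_right hM hle
    obtain ⟨⟨eK⟩⟩ | ⟨⟨eK⟩⟩ := hK
    · have hcomm : ∀ a b : K, a * b = b * a := fun a b =>
        eK.injective (by rw [map_mul, map_mul, mul_comm])
      obtain ⟨p, hp, hps, hpc⟩ := comm_minNormal hcomm hPmin
      have hKs : Nat.card K = s := by
        rw [Nat.card_congr (eK.toEquiv.trans Multiplicative.toAdd)]
        exact Nat.card_zmod s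
      have hMc : Nat.card M = p := hcard.trans hpc
      haveI : Fact p.Prime := ⟨hp⟩
      exact Or.inr (Or.inl ⟨hle, hPmin, isCyclic_of_prime_card hMc, p, hp, hKs ▸ hps, hMc⟩)
    · obtain ⟨p, hp, hps, hpc⟩ := dihedral_minNormal hs (minNormal_map eK hPmin)
      have hcard2 : Nat.card (M.map (MonoidHom.snd H K)) = p := by
        rw [← hpc]
        exact Nat.card_congr
          (Subgroup.equivMapOfInjective _ eK.toMonoidHom eK.injective).toEquiv
      have hMc : Nat.card M = p := hcard.trans hcard2
      haveI : Fact p.Prime := ⟨hp⟩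
      exact Or.inr (Or.inl ⟨hle, hPmin, isCyclic_of_prime_card hMc, p, hp, hps, hMc⟩)
  · -- central case
    have hcent : M ≤ Subgroup.center (H × K) := by
      rintro ⟨a, b⟩ hab
      rw [Subgroup.mem_center_iff]
      rintro ⟨h, k⟩
      have key : ∀ g : H × K, g * (a, b) * g⁻¹ * (a, b)⁻¹ ∈ M := fun g =>
        M.mul_mem (hM.1.conj_mem _ hab _) (M.inv_mem hab)
      have e1 : h * a = a * h := by
        have hc : ((h, 1) : H × K) * (a, b) * ((h, 1) : H × K)⁻¹ * ((a, b) : H × K)⁻¹ ∈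
            M ⊓ (⊤ : Subgroup H).prod ⊥ := by
          refine ⟨key _, Subgroup.mem_prod.mpr ⟨trivial, ?_⟩⟩
          rw [Subgroup.mem_bot]
          simp
        rw [hA, Subgroup.mem_bot] at hc
        have := (Prod.ext_iff.mp hc).1
        simp only [Prod.fst_mul, Prod.fst_inv, Prod.fst_one] at this
        have h2 : h * a * h⁻¹ = a := mul_inv_eq_one.mp this
        calc h * a = (h * a * h⁻¹) * h := by group
        _ = a * h := by rw [h2]
      have e2 : k * b = b * k := by
        have hc : ((1, k) : H × K) * (a, b) * ((1, k) : H × K)⁻¹ * ((a, b) : H × K)⁻¹ ∈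
            M ⊓ (⊥ : Subgroup H).prod ⊤ := by
          refine ⟨key _, Subgroup.mem_prod.mpr ⟨?_, trivial⟩⟩
          rw [Subgroup.mem_bot]
          simp
        rw [hB, Subgroup.mem_bot] at hc
        have := (Prod.ext_iff.mp hc).2
        simp only [Prod.snd_mul, Prod.snd_inv, Prod.snd_one] at this
        have h2 : k * b * k⁻¹ = b := mul_inv_eq_one.mp this
        calc k * b = (k * b * k⁻¹) * k := by group
        _ = b * k := by rw [h2]
      exact Prod.ext_iff.mpr ⟨e1, e2⟩
    obtain ⟨⟨a, b⟩, habM, hab1⟩ := M.bot_or_exists_ne_one.resolve_left hM.2.1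
    have ha1 : a ≠ 1 := by
      rintro rfl
      have hmem : ((1, b) : H × K) ∈ M ⊓ (⊥ : Subgroup H).prod ⊤ :=
        ⟨habM, Subgroup.mem_prod.mpr ⟨Subgroup.mem_bot.mpr rfl, trivial⟩⟩
      rw [hB, Subgroup.mem_bot] at hmem
      exact hab1 hmem
    have hb1 : b ≠ 1 := by
      rintro rfl
      have hmem : ((a, 1) : H × K) ∈ M ⊓ (⊤ : Subgroup H).prod ⊥ :=
        ⟨habM, Subgroup.mem_prod.mpr ⟨trivial, Subgroup.mem_bot.mpr rfl⟩⟩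
      rw [hA, Subgroup.mem_bot] at hmem
      exact hab1 hmem
    have hZ := Subgroup.mem_center_iff.mp (hcent habM)
    have haZ : ∀ h : H, h * a = a * h := fun h => (Prod.ext_iff.mp (hZ (h, 1))).1
    have hbZ : ∀ k : K, k * b = b * k := fun k => (Prod.ext_iff.mp (hZ (1, k))).2
    have haD : ∀ g, g * eH a = eH a * g := by
      intro g
      obtain ⟨h, rfl⟩ := eH.surjective g
      rw [← map_mul, ← map_mul, haZ]
    obtain ⟨h2r, haa⟩ := dihedral_center hr haD (by
      intro hh
      exact ha1 (eH.injective (by rw [hh, map_one])))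
    have haa' : a * a = 1 := eH.injective (by rw [map_mul, haa, map_one])
    have hbb : b * b = 1 := by
      have h1 : ((a, b) : H × K) * (a, b) ∈ M := M.mul_mem habM habM
      rw [Prod.mk_mul_mk, haa'] at h1
      have h2 : ((1, b * b) : H × K) ∈ M ⊓ (⊥ : Subgroup H).prod ⊤ :=
        ⟨h1, Subgroup.mem_prod.mpr ⟨Subgroup.mem_bot.mpr rfl, trivial⟩⟩
      rw [hB, Subgroup.mem_bot] at h2
      exact (Prod.ext_iff.mp h2).2
    haveI : Fact (Nat.Prime 2) := ⟨Nat.prime_two⟩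
    have h2s : 2 ∣ s := by
      obtain ⟨⟨eK⟩⟩ | ⟨⟨eK⟩⟩ := hK
      · have hob : orderOf b = 2 := orderOf_eq_prime (by rw [pow_two]; exact hbb) hb1
        have hd := orderOf_dvd_natCard b
        rw [hob] at hd
        have hKs : Nat.card K = s := by
          rw [Nat.card_congr (eK.toEquiv.trans Multiplicative.toAdd)]
          exact Nat.card_zmod s
        rwa [hKs] at hd
      · have hbD : ∀ g, g * eK b = eK b * g := by
          intro g
          obtain ⟨k, rfl⟩ := eK.surjective g
          rw [← map_mul, ← map_mul, hbZ]
        exact (dihedral_center hs hbD (by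
          intro hh
          exact hb1 (eK.injective (by rw [hh, map_one])))).1
    have habord : orderOf ((a, b) : H × K) = 2 := by
      refine orderOf_eq_prime ?_ hab1
      rw [pow_two, Prod.mk_mul_mk, haa', hbb]
      rfl
    have hQn : (Subgroup.zpowers ((a, b) : H × K)).Normal := by
      apply zpowers_normal_of_conj
      intro g
      have hc := hZ g
      have : g * (a, b) * g⁻¹ = (a, b) := by rw [hc]; group
      rw [this]
      exact Subgroup.mem_zpowers _
    have hQ := (hM.2.2 _ hQn (Subgroup.zpowers_le.mpr habM)).resolve_left (fun h =>
      hab1 (by simpa [h, Subgroup.mem_bot] using Subgroup.mem_zpowers ((a, b) : H × K)))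
    have hMcard : Nat.card M = 2 := by rw [← hQ, Nat.card_zpowers, habord]
    exact Or.inr (Or.inr ⟨h2r, h2s, hcent, isCyclic_of_prime_card hMcard, hMcard⟩)

end OG4
end

section
/- Let H and K be groups and let M be a normal subgroup of the direct product G = H × K such that M ∩ (H × {1}) and M ∩ ({1} × K) are both trivial. Then M is contained in the center of G. -/
open SimpleGraph

namespace OG4

variable {V : Type*} {W : Type*}

/-- a normal subgroup of `H × K` meeting both factors trivially is central. -/
theorem stmt13 (H K : Type*) [Group H] [Group K] (M : Subgroup (H × K)) (hM : M.Normal)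
    (h1 : M ⊓ (⊤ : Subgroup H).prod (⊥ : Subgroup K) = ⊥)
    (h2 : M ⊓ (⊥ : Subgroup H).prod (⊤ : Subgroup K) = ⊥) :
    M ≤ Subgroup.center (H × K) := by
  intro m hm
  rw [Subgroup.mem_center_iff]
  intro g
  have key : ∀ g : H × K, g * m * g⁻¹ * m⁻¹ ∈ M := fun g =>
    M.mul_mem (hM.conj_mem m hm g) (M.inv_mem hm)
  have e1 : ((g.1, (1:K)) : H × K) * m * (g.1, (1:K))⁻¹ * m⁻¹ ∈
      M ⊓ (⊤ : Subgroup H).prod (⊥ : Subgroup K) := by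
    refine ⟨key _, Subgroup.mem_prod.mpr ⟨trivial, ?_⟩⟩
    simp [Prod.snd_mul, mul_assoc]
  have e2 : ((1:H), g.2) * m * ((1:H), g.2)⁻¹ * m⁻¹ ∈
      M ⊓ (⊥ : Subgroup H).prod (⊤ : Subgroup K) := by
    refine ⟨key _, Subgroup.mem_prod.mpr ⟨?_, trivial⟩⟩
    simp [Prod.fst_mul, mul_assoc]
  rw [h1, Subgroup.mem_bot] at e1
  rw [h2, Subgroup.mem_bot] at e2
  have c1 : g.1 * m.1 = m.1 * g.1 := by
    have := congrArg Prod.fst e1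
    simp only [Prod.fst_mul, Prod.fst_inv, Prod.fst_one] at this
    have h : g.1 * m.1 * g.1⁻¹ = m.1 := mul_inv_eq_one.mp (by simpa [mul_assoc] using this)
    calc g.1 * m.1 = (g.1 * m.1 * g.1⁻¹) * g.1 := by group
      _ = m.1 * g.1 := by rw [h]
  have c2 : g.2 * m.2 = m.2 * g.2 := by
    have := congrArg Prod.snd e2
    simp only [Prod.snd_mul, Prod.snd_inv, Prod.snd_one] at this
    have h : g.2 * m.2 * g.2⁻¹ = m.2 := mul_inv_eq_one.mp (by simpa [mul_assoc] using this)
    calc g.2 * m.2 = (g.2 * m.2 * g.2⁻¹) * g.2 := by group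
      _ = m.2 * g.2 := by rw [h]
  exact Prod.ext c1 c2

end OG4
end

section
/- Let p and q be odd primes (not necessarily distinct) and consider the permutations of ℤ_{2p} × ℤ_{2q} given by μ(i,j) = (i+1,j), σν(i,j) = (-i,j+1), and τ(i,j) = (-i,-j), and let H = ⟨μ, σν, τ⟩, a subgroup of the symmetric group on ℤ_{2p} × ℤ_{2q}. Then the minimal normal subgroups of H are exactly ⟨μ²⟩, ⟨μ^p⟩, and ⟨ν²⟩, where μ² is the permutation (i,j) ↦ (i+2,j), μ^p is (i,j) ↦ (i+p,j), and ν² is (i,j) ↦ (i,j+2). -/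
open SimpleGraph

namespace OG4

variable {V : Type*} {W : Type*}

section Stmt16Aux

open Subgroup

/-- Affine permutation `x ↦ ±x + a` of `ZMod n`. -/
def aff {n : ℕ} (e : Bool) (a : ZMod n) : Equiv.Perm (ZMod n) :=
  (if e then Equiv.neg (ZMod n) else Equiv.refl _).trans (Equiv.addRight a)

@[simp] lemma aff_apply {n : ℕ} (e : Bool) (a x : ZMod n) :
    aff e a x = (if e then -x else x) + a := by
  cases e <;> simp [aff]

lemma aff_mul {n : ℕ} (e₁ e₂ : Bool) (a₁ a₂ : ZMod n) :
    aff e₁ a₁ * aff e₂ a₂ = aff (xor e₁ e₂) ((if e₁ then -a₂ else a₂) + a₁) := by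
  ext x
  cases e₁ <;> cases e₂ <;> simp [Equiv.Perm.mul_apply] <;> ring

lemma aff_inv {n : ℕ} (e : Bool) (a : ZMod n) :
    (aff e a)⁻¹ = aff e (if e then a else -a) := by
  refine inv_eq_of_mul_eq_one_right ?_
  rw [aff_mul]
  cases e <;> · ext x; simp

/-- Affine permutation of a product of two `ZMod`s. -/
def affP {r s : ℕ} (e : Bool) (a : ZMod r) (d : Bool) (b : ZMod s) :
    Equiv.Perm (ZMod r × ZMod s) := (aff e a).prodCongr (aff d b)

@[simp] lemma affP_apply {r s : ℕ} (e : Bool) (a : ZMod r) (d : Bool) (b : ZMod s)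
    (z : ZMod r × ZMod s) :
    affP e a d b z = ((if e then -z.1 else z.1) + a, (if d then -z.2 else z.2) + b) := by
  simp [affP, Equiv.prodCongr_apply, Prod.map]

lemma affP_congr {r s : ℕ} (e d : Bool) {a₁ a₂ : ZMod r} {b₁ b₂ : ZMod s}
    (ha : a₁ = a₂) (hb : b₁ = b₂) : affP e a₁ d b₁ = affP e a₂ d b₂ := by
  rw [ha, hb]

lemma affP_mul {r s : ℕ} (e₁ e₂ d₁ d₂ : Bool) (a₁ a₂ : ZMod r) (b₁ b₂ : ZMod s) :
    affP e₁ a₁ d₁ b₁ * affP e₂ a₂ d₂ b₂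
      = affP (xor e₁ e₂) ((if e₁ then -a₂ else a₂) + a₁)
          (xor d₁ d₂) ((if d₁ then -b₂ else b₂) + b₁) := by
  apply Equiv.ext
  rintro ⟨x, y⟩
  cases e₁ <;> cases e₂ <;> cases d₁ <;> cases d₂ <;>
    simp [Equiv.Perm.mul_apply, Prod.ext_iff] <;> (try constructor) <;> ring

lemma affP_inv {r s : ℕ} (e d : Bool) (a : ZMod r) (b : ZMod s) :
    (affP e a d b)⁻¹ = affP e (if e then a else -a) d (if d then b else -b) := by
  refine inv_eq_of_mul_eq_one_right ?_
  rw [affP_mul]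
  cases e <;> cases d <;> (apply Equiv.ext; rintro ⟨x, y⟩; simp [Prod.ext_iff])

lemma affP_one {r s : ℕ} : (affP false (0 : ZMod r) false (0 : ZMod s)) = 1 := by
  apply Equiv.ext; rintro ⟨x, y⟩; simp [Prod.ext_iff]

lemma affP_eq_one_iff {r s : ℕ} (a : ZMod r) (b : ZMod s) :
    affP false a false b = 1 ↔ a = 0 ∧ b = 0 := by
  constructor
  · intro h
    have := Equiv.congr_fun h (0, 0)
    simpa [Prod.ext_iff] using this
  · rintro ⟨rfl, rfl⟩; exact affP_one

lemma affP_conj {r s : ℕ} (e : Bool) (a : ZMod r) (d : Bool) (b : ZMod s)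
    (a' : ZMod r) (b' : ZMod s) :
    affP e a d b * affP false a' false b' * (affP e a d b)⁻¹
      = affP false (if e then -a' else a') false (if d then -b' else b') := by
  rw [affP_inv, affP_mul, affP_mul]
  cases e <;> cases d <;> refine affP_congr _ _ ?_ ?_ <;> simp <;> ring

lemma affP_false_pow {r s : ℕ} (a : ZMod r) (b : ZMod s) (k : ℕ) :
    (affP false a false b) ^ k = affP false ((k : ZMod r) * a) false ((k : ZMod s) * b) := by
  induction k with
  | zero => simpa using affP_one.symm
  | succ k ih =>
    rw [pow_succ, ih, affP_mul]
    exact affP_congr _ _ (by push_cast; ring) (by push_cast; ring)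

lemma mu_eq (r s : ℕ) : mu r s = affP false 1 false 0 := by
  apply Equiv.ext; rintro ⟨x, y⟩; simp [mu, Prod.ext_iff, Prod.map]

lemma sigmaNu_eq (r s : ℕ) : sigmaNu r s = affP true 0 false 1 := by
  apply Equiv.ext; rintro ⟨x, y⟩; simp [sigmaNu, Prod.ext_iff, Prod.map]

lemma tau_eq (r s : ℕ) : tau r s = affP true 0 true 0 := by
  apply Equiv.ext; rintro ⟨x, y⟩; simp [tau, Prod.ext_iff, Prod.map]

lemma muSq_eq (r s : ℕ) : muSq r s = affP false 2 false 0 := by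
  apply Equiv.ext; rintro ⟨x, y⟩; simp [muSq, Prod.ext_iff, Prod.map]

lemma nuSq_eq (r s : ℕ) : nuSq r s = affP false 0 false 2 := by
  apply Equiv.ext; rintro ⟨x, y⟩; simp [nuSq, Prod.ext_iff, Prod.map]

lemma muPow_eq (r s k : ℕ) : muPow r s k = affP false (k : ZMod r) false 0 := by
  apply Equiv.ext; rintro ⟨x, y⟩; simp [muPow, Prod.ext_iff, Prod.map]

/-- Parity of an element of `ZMod (2*q)`. -/
def par (q : ℕ) (b : ZMod (2 * q)) : ZMod 2 := ZMod.castHom ⟨q, rfl⟩ (ZMod 2) b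

lemma zmod2_neg (z : ZMod 2) : -z = z := by revert z; decide

lemma par_add (q : ℕ) (x y : ZMod (2 * q)) : par q (x + y) = par q x + par q y :=
  map_add _ _ _

lemma par_neg (q : ℕ) (x : ZMod (2 * q)) : par q (-x) = par q x := by
  rw [par, map_neg]
  exact zmod2_neg _

lemma par_natCast (q m : ℕ) : par q (m : ZMod (2 * q)) = (m : ZMod 2) :=
  map_natCast _ m

lemma par_zero (q : ℕ) : par q 0 = 0 := map_zero _

lemma par_one (q : ℕ) : par q 1 = 1 := map_one _

lemma par_two (q : ℕ) : par q 2 = 0 := by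
  rw [show (2 : ZMod (2 * q)) = ((2 : ℕ) : ZMod (2 * q)) by norm_cast, par_natCast]
  decide

/-- Every element of `H(r, 2q)` is affine, with sign/parity constraint. -/
lemma hgroup_form {r q : ℕ} {h : Equiv.Perm (ZMod r × ZMod (2 * q))}
    (hh : h ∈ Hgroup r (2 * q)) :
    ∃ (e : Bool) (a : ZMod r) (d : Bool) (b : ZMod (2 * q)),
      ((if e then (1 : ZMod 2) else 0) + (if d then 1 else 0) = par q b) ∧
        h = affP e a d b := by
  induction hh using Subgroup.closure_induction with
  | mem x hx =>
    rcases hx with rfl | rfl | rfl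
    · exact ⟨false, 1, false, 0, by simp [par_zero], mu_eq _ _⟩
    · exact ⟨true, 0, false, 1, by simp [par_one], sigmaNu_eq _ _⟩
    · exact ⟨true, 0, true, 0, by simp [par_zero]; decide, tau_eq _ _⟩
  | one => exact ⟨false, 0, false, 0, by simp [par_zero], affP_one.symm⟩
  | mul x y hx hy ihx ihy =>
    obtain ⟨e₁, a₁, d₁, b₁, hc₁, rfl⟩ := ihx
    obtain ⟨e₂, a₂, d₂, b₂, hc₂, rfl⟩ := ihy
    refine ⟨xor e₁ e₂, (if e₁ then -a₂ else a₂) + a₁, xor d₁ d₂,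
      (if d₁ then -b₂ else b₂) + b₁, ?_, (affP_mul _ _ _ _ _ _ _ _)⟩
    rw [par_add]
    have hb2 : par q (if d₁ then -b₂ else b₂) = par q b₂ := by
      cases d₁ <;> simp [par_neg]
    rw [hb2, ← hc₁, ← hc₂]
    cases e₁ <;> cases e₂ <;> cases d₁ <;> cases d₂ <;> decide
  | inv x hx ihx =>
    obtain ⟨e, a, d, b, hc, rfl⟩ := ihx
    refine ⟨e, if e then a else -a, d, if d then b else -b, ?_, affP_inv _ _ _ _⟩
    have : par q (if d then b else -b) = par q b := by cases d <;> simp [par_neg]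
    rw [this, hc]

lemma exists_k {p : ℕ} (hp : p.Prime) {c : ZMod (2 * p)} (hc : c ≠ 0)
    (h : ((p : ℕ) : ZMod (2 * p)) * c = 0) : ∃ k : ℕ, (k : ZMod (2 * p)) * c = 2 := by
  haveI : NeZero (2 * p) := ⟨by have := hp.pos; omega⟩
  have h1 : (2 * p) ∣ p * c.val := by
    rw [← ZMod.natCast_eq_zero_iff, Nat.cast_mul, ZMod.natCast_zmod_val]
    exact h
  obtain ⟨u, hu⟩ := h1
  have hp0 := hp.pos
  have hcval : c.val = 2 * u := by
    have : p * c.val = p * (2 * u) := by rw [hu]; ring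
    exact Nat.eq_of_mul_eq_mul_left hp0 this
  have hlt : c.val < 2 * p := ZMod.val_lt c
  have hu0 : u ≠ 0 := by
    rintro rfl
    apply hc
    have : c.val = 0 := by omega
    rw [← ZMod.natCast_zmod_val c, this, Nat.cast_zero]
  have hup : u < p := by omega
  haveI : Fact p.Prime := ⟨hp⟩
  have hne : ((u : ℕ) : ZMod p) ≠ 0 := by
    rw [Ne, ZMod.natCast_eq_zero_iff]
    intro hdvd
    exact absurd (Nat.le_of_dvd (Nat.pos_of_ne_zero hu0) hdvd) (by omega)
  set k := (((u : ℕ) : ZMod p)⁻¹).val with hk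
  have hinv : ((k * u : ℕ) : ZMod p) = 1 := by
    push_cast
    rw [hk, ZMod.natCast_zmod_val, inv_mul_cancel₀ hne]
  have hmod : (k * u) % p = 1 % p := by
    rwa [← Nat.cast_one, ZMod.natCast_eq_natCast_iff] at hinv
  have h1p : 1 % p = 1 := Nat.mod_eq_of_lt hp.one_lt
  obtain ⟨m, hm⟩ : ∃ m, k * u = p * m + 1 := by
    refine ⟨(k * u) / p, ?_⟩
    have := Nat.div_add_mod (k * u) p
    omega
  refine ⟨k, ?_⟩
  have hc2 : c = ((2 * u : ℕ) : ZMod (2 * p)) := by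
    rw [← ZMod.natCast_zmod_val c, hcval]
  rw [hc2, ← Nat.cast_mul]
  have : k * (2 * u) = 2 * p * m + 2 := by rw [show k * (2*u) = 2 * (k*u) by ring, hm]; ring
  rw [this]
  push_cast
  rw [show ((2:ZMod (2*p)) * p * m + 2 = ((2*p : ℕ) : ZMod (2*p)) * m + 2) by push_cast; ring,
    ZMod.natCast_self, zero_mul, zero_add]

lemma two_torsion {p : ℕ} (hp : 0 < p) {c : ZMod (2 * p)} (h : c + c = 0) :
    c = 0 ∨ c = ((p : ℕ) : ZMod (2 * p)) := by
  haveI : NeZero (2 * p) := ⟨by omega⟩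
  have h1 : (2 * p) ∣ 2 * c.val := by
    have hcast : ((2 * c.val : ℕ) : ZMod (2 * p)) = 0 := by
      push_cast [ZMod.natCast_zmod_val]
      linear_combination h
    exact (ZMod.natCast_eq_zero_iff _ _).mp hcast
  obtain ⟨t, ht⟩ := h1
  have hcval : c.val = p * t := by
    rw [mul_assoc] at ht
    exact Nat.eq_of_mul_eq_mul_left two_pos ht
  have hlt : c.val < 2 * p := ZMod.val_lt c
  have : t = 0 ∨ t = 1 := by
    rcases Nat.lt_or_ge t 2 with h' | h'
    · omega
    · exfalso; nlinarith
  rcases this with rfl | rfl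
  · left; rw [← ZMod.natCast_zmod_val c, hcval]; simp
  · right; rw [← ZMod.natCast_zmod_val c, hcval, Nat.mul_one]

lemma normalIn_closure_singleton {G : Type*} [Group G] {S : Set G} {x : G}
    (hx : x ∈ Subgroup.closure S)
    (hg : ∀ g ∈ S, g * x * g⁻¹ = x ∨ g * x * g⁻¹ = x⁻¹) :
    NormalIn (Subgroup.closure {x}) (Subgroup.closure S) := by
  constructor
  · rw [Subgroup.closure_le]
    simpa using hx
  · intro h hh n hn
    rw [← Subgroup.zpowers_eq_closure] at hn ⊢
    obtain ⟨k, rfl⟩ := hn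
    have key : h * x * h⁻¹ ∈ Subgroup.zpowers x ∧ h⁻¹ * x * h ∈ Subgroup.zpowers x := by
      induction hh using Subgroup.closure_induction with
      | mem g hgS =>
        rcases hg g hgS with h1 | h1
        · refine ⟨by rw [h1]; exact Subgroup.mem_zpowers x, ?_⟩
          have h2 : g⁻¹ * (g * x * g⁻¹) * g = g⁻¹ * x * g := by rw [h1]
          have h3 : g⁻¹ * (g * x * g⁻¹) * g = x := by group
          rw [← h2, h3]
          exact Subgroup.mem_zpowers x
        · refine ⟨by rw [h1]; exact Subgroup.inv_mem _ (Subgroup.mem_zpowers x), ?_⟩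
          have h2 : g⁻¹ * (g * x * g⁻¹) * g = g⁻¹ * x⁻¹ * g := by rw [h1]
          have h3 : g⁻¹ * (g * x * g⁻¹) * g = x := by group
          rw [h3] at h2
          have h4 : g⁻¹ * x * g = (g⁻¹ * x⁻¹ * g)⁻¹ := by group
          rw [h4, ← h2]
          exact Subgroup.inv_mem _ (Subgroup.mem_zpowers x)
      | one => simpa using Subgroup.mem_zpowers x
      | mul a b ha hb iha ihb =>
        constructor
        · have h1 : (a * b) * x * (a * b)⁻¹ = a * (b * x * b⁻¹) * a⁻¹ := by group
          rw [h1]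
          obtain ⟨m₂, hm₂⟩ := ihb.1
          rw [← hm₂, ← conj_zpow]
          exact Subgroup.zpow_mem _ iha.1 m₂
        · have h1 : (a * b)⁻¹ * x * (a * b) = b⁻¹ * (a⁻¹ * x * a) * b := by group
          rw [h1]
          obtain ⟨n₁, hn₁⟩ := iha.2
          rw [← hn₁, show b⁻¹ * x ^ n₁ * b = (b⁻¹ * x * (b⁻¹)⁻¹) ^ n₁ by
            rw [conj_zpow, inv_inv]]
          exact Subgroup.zpow_mem _ (by rw [inv_inv]; exact ihb.2) n₁
      | inv a ha iha => exact ⟨by rw [inv_inv]; exact iha.2, by rw [inv_inv]; exact iha.1⟩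
    rw [show h * x ^ k * h⁻¹ = (h * x * h⁻¹) ^ k from (conj_zpow).symm]
    exact Subgroup.zpow_mem _ key.1 k


lemma card_le_prime_subgroup {G : Type*} [Group G] [Finite G] {M : Subgroup G}
    (hM : (Nat.card M).Prime) (N : Subgroup G) (hNM : N ≤ M) : N = ⊥ ∨ N = M := by
  rcases hM.eq_one_or_self_of_dvd _ (Subgroup.card_dvd_of_le hNM) with h1 | h1
  · left; exact Subgroup.card_eq_one.mp h1
  · right; exact Subgroup.eq_of_le_of_card_ge hNM (le_of_eq h1.symm)

lemma card_closure_singleton {G : Type*} [Group G] (x : G) :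
    Nat.card (Subgroup.closure {x}) = orderOf x := by
  rw [← Subgroup.zpowers_eq_closure, Nat.card_zpowers]

lemma isMinimalNormalIn_closure_singleton {G : Type*} [Group G] [Finite G] {S : Set G} {x : G}
    (hx : x ∈ Subgroup.closure S)
    (hg : ∀ g ∈ S, g * x * g⁻¹ = x ∨ g * x * g⁻¹ = x⁻¹)
    (hcard : (Nat.card (Subgroup.closure {x})).Prime) :
    IsMinimalNormalIn (Subgroup.closure {x}) (Subgroup.closure S) := by
  refine ⟨normalIn_closure_singleton hx hg, ?_,
    fun N _ hle => card_le_prime_subgroup hcard N hle⟩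
  intro hbot
  rw [hbot, Subgroup.card_bot] at hcard
  exact Nat.not_prime_one hcard

lemma conj_gens {r s : ℕ} (a' : ZMod r) (b' : ZMod s) :
    ∀ g ∈ ({mu r s, sigmaNu r s, tau r s} : Set (Equiv.Perm (ZMod r × ZMod s))),
      g * affP false a' false b' * g⁻¹ = affP false a' false b' ∨
      g * affP false a' false b' * g⁻¹ = affP false (-a') false b' ∨
      g * affP false a' false b' * g⁻¹ = affP false (-a') false (-b') := by
  rintro g (rfl | rfl | rfl)
  · left; rw [mu_eq, affP_conj]; exact affP_congr _ _ (by simp) (by simp)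
  · right; left; rw [sigmaNu_eq, affP_conj]; exact affP_congr _ _ (by simp) (by simp)
  · right; right; rw [tau_eq, affP_conj]; exact affP_congr _ _ (by simp) (by simp)

lemma orderOf_muSq {p : ℕ} (hp : p.Prime) (s : ℕ) : orderOf (muSq (2 * p) s) = p := by
  haveI : Fact p.Prime := ⟨hp⟩
  refine orderOf_eq_prime ?_ ?_
  · rw [muSq_eq, affP_false_pow]
    have h1 : ((p : ℕ) : ZMod (2 * p)) * 2 = 0 := by
      rw [show ((p : ℕ) : ZMod (2 * p)) * 2 = ((2 * p : ℕ) : ZMod (2 * p)) by push_cast; ring,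
        ZMod.natCast_self]
    rw [h1, mul_zero]
    exact affP_one
  · rw [muSq_eq, Ne, affP_eq_one_iff]
    rintro ⟨h2, -⟩
    have hd : (2 * p) ∣ 2 := by
      rw [← ZMod.natCast_eq_zero_iff]
      exact_mod_cast h2
    have h3 := Nat.le_of_dvd (by norm_num) hd
    have h4 := hp.two_le
    omega

lemma orderOf_nuSq {q : ℕ} (hq : q.Prime) (r : ℕ) : orderOf (nuSq r (2 * q)) = q := by
  haveI : Fact q.Prime := ⟨hq⟩
  refine orderOf_eq_prime ?_ ?_
  · rw [nuSq_eq, affP_false_pow]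
    have h1 : ((q : ℕ) : ZMod (2 * q)) * 2 = 0 := by
      rw [show ((q : ℕ) : ZMod (2 * q)) * 2 = ((2 * q : ℕ) : ZMod (2 * q)) by push_cast; ring,
        ZMod.natCast_self]
    rw [h1, mul_zero]
    exact affP_one
  · rw [nuSq_eq, Ne, affP_eq_one_iff]
    rintro ⟨-, h2⟩
    have hd : (2 * q) ∣ 2 := by
      rw [← ZMod.natCast_eq_zero_iff]
      exact_mod_cast h2
    have h3 := Nat.le_of_dvd (by norm_num) hd
    have h4 := hq.two_le
    omega

lemma orderOf_muPow {p : ℕ} (hp : 0 < p) (s : ℕ) : orderOf (muPow (2 * p) s p) = 2 := by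
  haveI : Fact (Nat.Prime 2) := ⟨Nat.prime_two⟩
  refine orderOf_eq_prime ?_ ?_
  · rw [muPow_eq, affP_false_pow]
    have h1 : ((2 : ℕ) : ZMod (2 * p)) * ((p : ℕ) : ZMod (2 * p)) = 0 := by
      rw [show ((2 : ℕ) : ZMod (2 * p)) * ((p : ℕ) : ZMod (2 * p))
          = ((2 * p : ℕ) : ZMod (2 * p)) by push_cast; ring, ZMod.natCast_self]
    rw [show (((2 : ℕ) : ZMod (2 * p)) * ((p : ℕ) : ZMod (2 * p)) = 0) from h1, mul_zero]
    exact affP_one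
  · rw [muPow_eq, Ne, affP_eq_one_iff]
    rintro ⟨h2, -⟩
    have hd : (2 * p) ∣ p := by
      rw [← ZMod.natCast_eq_zero_iff]
      exact h2
    have h3 := Nat.le_of_dvd hp hd
    omega

lemma comm_mu {r s : ℕ} (a : ZMod r) (d : Bool) (b : ZMod s) :
    affP true a d b * mu r s * (affP true a d b)⁻¹ * (mu r s)⁻¹
      = affP false (-2) false 0 := by
  apply Equiv.ext; rintro ⟨x, y⟩
  rw [mu_eq, affP_inv, affP_inv]
  cases d <;> simp [Equiv.Perm.mul_apply, Prod.ext_iff] <;> (try constructor) <;> ring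

lemma comm_nuSq {r s : ℕ} (a : ZMod r) (b : ZMod s) :
    affP false a true b * affP false 0 false 2 * (affP false a true b)⁻¹
        * (affP false (0 : ZMod r) false (2 : ZMod s))⁻¹
      = affP false 0 false (-4) := by
  apply Equiv.ext; rintro ⟨x, y⟩
  rw [affP_inv, affP_inv]
  simp [Equiv.Perm.mul_apply, Prod.ext_iff] <;> (try constructor) <;> ring

lemma finish_lemma {p q : ℕ} (hp : p.Prime) (hpo : Odd p) (hq : q.Prime) (hqo : Odd q)
    {M : Subgroup (Equiv.Perm (ZMod (2 * p) × ZMod (2 * q)))}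
    (hnorm : ∀ h ∈ Hgroup (2 * p) (2 * q), ∀ n ∈ M, h * n * h⁻¹ ∈ M)
    (a : ZMod (2 * p)) (b : ZMod (2 * q)) (hb : par q b = 0)
    (htM : affP false a false b ∈ M) (htne : affP false a false b ≠ 1) :
    Subgroup.closure {muSq (2 * p) (2 * q)} ≤ M ∨
      Subgroup.closure {muPow (2 * p) (2 * q) p} ≤ M ∨
      Subgroup.closure {nuSq (2 * p) (2 * q)} ≤ M := by
  haveI : NeZero (2 * p) := ⟨by have := hp.pos; omega⟩
  haveI : NeZero (2 * q) := ⟨by have := hq.pos; omega⟩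
  have hsnH : sigmaNu (2 * p) (2 * q) ∈ Hgroup (2 * p) (2 * q) :=
    Subgroup.subset_closure (by simp)
  have hu : affP false (-a) false b ∈ M := by
    have h2 := hnorm _ hsnH _ htM
    rw [sigmaNu_eq, affP_conj] at h2
    simpa using h2
  have hw1 : affP false (0 : ZMod (2 * p)) false (b + b) ∈ M := by
    have h3 := M.mul_mem hu htM
    rw [affP_mul] at h3
    simpa using h3
  have hw2 : affP false (a + a) false (0 : ZMod (2 * q)) ∈ M := by
    have h4 := M.mul_mem htM (M.inv_mem hu)
    rw [affP_inv, affP_mul] at h4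
    simpa [add_comm] using h4
  by_cases hbb : b + b = 0
  · by_cases haa : a + a = 0
    · right; left
      rcases two_torsion hq.pos hbb with hb0 | hbq
      · rcases two_torsion hp.pos haa with ha0 | hap
        · exact absurd (by rw [ha0, hb0]; exact affP_one) htne
        · rw [Subgroup.closure_le, Set.singleton_subset_iff]
          have heq : muPow (2 * p) (2 * q) p = affP false a false b := by
            rw [muPow_eq, hap, hb0]
          exact heq ▸ htM
      · exfalso
        rw [hbq, par_natCast] at hb
        have hq1 : ((q : ℕ) : ZMod 2) = 1 := by
          rw [show ((q : ℕ) : ZMod 2) = ((q % 2 : ℕ) : ZMod 2) from (ZMod.natCast_mod q 2).symm,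
            Nat.odd_iff.mp hqo, Nat.cast_one]
        rw [hq1] at hb
        exact one_ne_zero hb
    · left
      have hpa : ((p : ℕ) : ZMod (2 * p)) * (a + a) = 0 := by
        rw [show ((p : ℕ) : ZMod (2 * p)) * (a + a) = ((2 * p : ℕ) : ZMod (2 * p)) * a by
          push_cast; ring, ZMod.natCast_self, zero_mul]
      obtain ⟨k, hk⟩ := exists_k hp haa hpa
      rw [Subgroup.closure_le, Set.singleton_subset_iff]
      have heq : muSq (2 * p) (2 * q) = (affP false (a + a) false (0 : ZMod (2 * q))) ^ k := by
        rw [affP_false_pow, muSq_eq]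
        exact affP_congr _ _ hk.symm (by simp)
      rw [SetLike.mem_coe, heq]
      exact M.pow_mem hw2 k
  · right; right
    have hqb : ((q : ℕ) : ZMod (2 * q)) * (b + b) = 0 := by
      rw [show ((q : ℕ) : ZMod (2 * q)) * (b + b) = ((2 * q : ℕ) : ZMod (2 * q)) * b by
        push_cast; ring, ZMod.natCast_self, zero_mul]
    obtain ⟨k, hk⟩ := exists_k hq hbb hqb
    rw [Subgroup.closure_le, Set.singleton_subset_iff]
    have heq : nuSq (2 * p) (2 * q) = (affP false (0 : ZMod (2 * p)) false (b + b)) ^ k := by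
      rw [affP_false_pow, nuSq_eq]
      exact affP_congr _ _ (by simp) hk.symm
    rw [SetLike.mem_coe, heq]
    exact M.pow_mem hw1 k

end Stmt16Aux

/-- the minimal normal subgroups of `H(2p,2q)` are exactly `⟨μ²⟩`, `⟨μ^p⟩` and
`⟨ν²⟩`. -/
theorem stmt16 (p q : ℕ) (hp : p.Prime) (hpo : Odd p) (hq : q.Prime) (hqo : Odd q)
    (M : Subgroup (Equiv.Perm (ZMod (2 * p) × ZMod (2 * q)))) :
    IsMinimalNormalIn M (Hgroup (2 * p) (2 * q)) ↔
      (M = Subgroup.closure {muSq (2 * p) (2 * q)} ∨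
        M = Subgroup.closure {muPow (2 * p) (2 * q) p} ∨
        M = Subgroup.closure {nuSq (2 * p) (2 * q)}) := by
  haveI : NeZero (2 * p) := ⟨by have := hp.pos; omega⟩
  haveI : NeZero (2 * q) := ⟨by have := hq.pos; omega⟩
  have hHdef : Hgroup (2 * p) (2 * q)
      = Subgroup.closure {mu (2 * p) (2 * q), sigmaNu (2 * p) (2 * q), tau (2 * p) (2 * q)} :=
    rfl
  have hmuH : mu (2 * p) (2 * q) ∈ Hgroup (2 * p) (2 * q) :=
    Subgroup.subset_closure (by simp)
  -- membership of candidates in H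
  have hmuSqH : muSq (2 * p) (2 * q) ∈ Hgroup (2 * p) (2 * q) := by
    have heq : muSq (2 * p) (2 * q) = mu (2 * p) (2 * q) * mu (2 * p) (2 * q) := by
      rw [mu_eq, affP_mul, muSq_eq]
      exact affP_congr _ _ (by norm_num) (by norm_num)
    rw [heq]; exact Subgroup.mul_mem _ hmuH hmuH
  have hmuPowH : muPow (2 * p) (2 * q) p ∈ Hgroup (2 * p) (2 * q) := by
    have heq : muPow (2 * p) (2 * q) p = mu (2 * p) (2 * q) ^ p := by
      rw [mu_eq, affP_false_pow, muPow_eq]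
      exact affP_congr _ _ (by rw [mul_one]) (by rw [mul_zero])
    rw [heq]; exact Subgroup.pow_mem _ hmuH p
  have hnuSqH : nuSq (2 * p) (2 * q) ∈ Hgroup (2 * p) (2 * q) := by
    have hsnH : sigmaNu (2 * p) (2 * q) ∈ Hgroup (2 * p) (2 * q) :=
      Subgroup.subset_closure (by simp)
    have heq : nuSq (2 * p) (2 * q) = sigmaNu (2 * p) (2 * q) * sigmaNu (2 * p) (2 * q) := by
      rw [sigmaNu_eq, affP_mul, nuSq_eq]
      exact affP_congr _ _ (by norm_num) (by norm_num)
    rw [heq]; exact Subgroup.mul_mem _ hsnH hsnH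
  -- conjugation facts
  have hg1 : ∀ g ∈ ({mu (2*p) (2*q), sigmaNu (2*p) (2*q), tau (2*p) (2*q)} :
      Set (Equiv.Perm (ZMod (2*p) × ZMod (2*q)))),
      g * muSq (2*p) (2*q) * g⁻¹ = muSq (2*p) (2*q) ∨
      g * muSq (2*p) (2*q) * g⁻¹ = (muSq (2*p) (2*q))⁻¹ := by
    intro g hgs
    rw [muSq_eq]
    rcases conj_gens 2 0 g hgs with h | h | h
    · left; exact h
    · right; rw [h, affP_inv]; exact affP_congr _ _ (by simp) (by simp)
    · right; rw [h, affP_inv]; exact affP_congr _ _ (by simp) (by simp)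
  have hg2 : ∀ g ∈ ({mu (2*p) (2*q), sigmaNu (2*p) (2*q), tau (2*p) (2*q)} :
      Set (Equiv.Perm (ZMod (2*p) × ZMod (2*q)))),
      g * muPow (2*p) (2*q) p * g⁻¹ = muPow (2*p) (2*q) p ∨
      g * muPow (2*p) (2*q) p * g⁻¹ = (muPow (2*p) (2*q) p)⁻¹ := by
    intro g hgs
    rw [muPow_eq]
    rcases conj_gens ((p : ℕ) : ZMod (2*p)) 0 g hgs with h | h | h
    · left; exact h
    · right; rw [h, affP_inv]; exact affP_congr _ _ (by simp) (by simp)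
    · right; rw [h, affP_inv]; exact affP_congr _ _ (by simp) (by simp)
  have hg3 : ∀ g ∈ ({mu (2*p) (2*q), sigmaNu (2*p) (2*q), tau (2*p) (2*q)} :
      Set (Equiv.Perm (ZMod (2*p) × ZMod (2*q)))),
      g * nuSq (2*p) (2*q) * g⁻¹ = nuSq (2*p) (2*q) ∨
      g * nuSq (2*p) (2*q) * g⁻¹ = (nuSq (2*p) (2*q))⁻¹ := by
    intro g hgs
    rw [nuSq_eq]
    rcases conj_gens (0 : ZMod (2*p)) 2 g hgs with h | h | h
    · left; exact h
    · left; rw [h]; exact affP_congr _ _ (by simp) (by simp)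
    · right; rw [h, affP_inv]; exact affP_congr _ _ (by simp) (by simp)
  -- cardinalities
  have hcard1 : (Nat.card (Subgroup.closure {muSq (2*p) (2*q)})).Prime := by
    rw [card_closure_singleton, orderOf_muSq hp]; exact hp
  have hcard2 : (Nat.card (Subgroup.closure {muPow (2*p) (2*q) p})).Prime := by
    rw [card_closure_singleton, orderOf_muPow hp.pos]; exact Nat.prime_two
  have hcard3 : (Nat.card (Subgroup.closure {nuSq (2*p) (2*q)})).Prime := by
    rw [card_closure_singleton, orderOf_nuSq hq]; exact hq
  -- the three minimal normal subgroups
  have hmin1 : IsMinimalNormalIn (Subgroup.closure {muSq (2*p) (2*q)}) (Hgroup (2*p) (2*q)) := by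
    rw [hHdef]; exact isMinimalNormalIn_closure_singleton (hHdef ▸ hmuSqH) hg1 hcard1
  have hmin2 : IsMinimalNormalIn (Subgroup.closure {muPow (2*p) (2*q) p})
      (Hgroup (2*p) (2*q)) := by
    rw [hHdef]; exact isMinimalNormalIn_closure_singleton (hHdef ▸ hmuPowH) hg2 hcard2
  have hmin3 : IsMinimalNormalIn (Subgroup.closure {nuSq (2*p) (2*q)}) (Hgroup (2*p) (2*q)) := by
    rw [hHdef]; exact isMinimalNormalIn_closure_singleton (hHdef ▸ hnuSqH) hg3 hcard3
  constructor
  · rintro ⟨⟨hMH, hnorm⟩, hMbot, hmin⟩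
    obtain ⟨g, hgM, hgne⟩ := (Subgroup.bot_or_exists_ne_one M).resolve_left hMbot
    obtain ⟨e, a, d, b, hcst, rfl⟩ := hgroup_form (hMH hgM)
    have main : Subgroup.closure {muSq (2*p) (2*q)} ≤ M ∨
        Subgroup.closure {muPow (2*p) (2*q) p} ≤ M ∨
        Subgroup.closure {nuSq (2*p) (2*q)} ≤ M := by
      cases e with
      | true =>
        have htM : affP false (-2 : ZMod (2*p)) false (0 : ZMod (2*q)) ∈ M := by
          rw [← comm_mu a d b]
          have h5 : affP true a d b * mu (2*p) (2*q) * (affP true a d b)⁻¹ * (mu (2*p) (2*q))⁻¹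
              = affP true a d b * (mu (2*p) (2*q) * (affP true a d b)⁻¹ * (mu (2*p) (2*q))⁻¹) := by
            group
          rw [h5]
          exact M.mul_mem hgM (hnorm _ hmuH _ (M.inv_mem hgM))
        have htne : affP false (-2 : ZMod (2*p)) false (0 : ZMod (2*q)) ≠ 1 := by
          rw [Ne, affP_eq_one_iff]
          rintro ⟨h2, -⟩
          rw [neg_eq_zero] at h2
          have hd : (2 * p) ∣ 2 := by
            rw [← ZMod.natCast_eq_zero_iff]; exact_mod_cast h2
          have h3 := Nat.le_of_dvd (by norm_num) hd
          have h4 := hp.two_le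
          omega
        exact finish_lemma hp hpo hq hqo hnorm _ _ (par_zero q) htM htne
      | false =>
        cases d with
        | true =>
          have htM : affP false (0 : ZMod (2*p)) false (-4 : ZMod (2*q)) ∈ M := by
            rw [← comm_nuSq a b]
            have h5 : affP false a true b * affP false 0 false 2 * (affP false a true b)⁻¹
                  * (affP false (0 : ZMod (2*p)) false (2 : ZMod (2*q)))⁻¹
                = affP false a true b * ((affP false (0 : ZMod (2*p)) false (2 : ZMod (2*q)))
                  * (affP false a true b)⁻¹
                  * (affP false (0 : ZMod (2*p)) false (2 : ZMod (2*q)))⁻¹) := by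
              group
            rw [h5]
            exact M.mul_mem hgM (hnorm _ (nuSq_eq (2*p) (2*q) ▸ hnuSqH) _ (M.inv_mem hgM))
          have htne : affP false (0 : ZMod (2*p)) false (-4 : ZMod (2*q)) ≠ 1 := by
            rw [Ne, affP_eq_one_iff]
            rintro ⟨-, h2⟩
            rw [neg_eq_zero] at h2
            have hd : (2 * q) ∣ 4 := by
              rw [← ZMod.natCast_eq_zero_iff]; exact_mod_cast h2
            have h3 := Nat.le_of_dvd (by norm_num) hd
            have h4 := hq.two_le
            have h5 : q ≠ 2 := by rintro rfl; exact (by norm_num : ¬ Odd 2) hqo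
            omega
          have hpar : par q (-4 : ZMod (2*q)) = 0 := by
            rw [par_neg, show (4 : ZMod (2*q)) = ((4 : ℕ) : ZMod (2*q)) by norm_cast,
              par_natCast]
            decide
          exact finish_lemma hp hpo hq hqo hnorm _ _ hpar htM htne
        | false =>
          have hpar : par q b = 0 := by simpa using hcst.symm
          exact finish_lemma hp hpo hq hqo hnorm _ _ hpar hgM hgne
    rcases main with hle | hle | hle
    · left
      rcases hmin _ hmin1.1 hle with hbot | heq
      · exact absurd hbot hmin1.2.1
      · exact heq.symm
    · right; left
      rcases hmin _ hmin2.1 hle with hbot | heq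
      · exact absurd hbot hmin2.2.1
      · exact heq.symm
    · right; right
      rcases hmin _ hmin3.1 hle with hbot | heq
      · exact absurd hbot hmin3.2.1
      · exact heq.symm
  · rintro (rfl | rfl | rfl)
    exacts [hmin1, hmin2, hmin3]

end OG4
end
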